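/- arXiv:1403.2545 — 15 statements merged into one kernel-verified Lean document; each statement's English description precedes it below -/
import Mathlib

section
/- Let m, n be real constants with n ≠ 0, let ε = 1 or ε = -1, let I ⊆ ℝ be an open interval, and let f, g : ℝ → ℝ be smooth with g nonvanishing on I. Let T : ℝ → ℝ be smooth with T'(t) = ε·g(t) on I. Suppose u : ℝ → ℝ → ℝ is smooth and positive on I × ℝ and satisfies ∂_t u + g(t) ∂_x(u^m) + f(t) ∂_x^3(u^n) = 0 on I × ℝ, and suppose v : ℝ → ℝ → ℝ is smooth with v(T(t), x) = u(t, x) for all t ∈ I, x ∈ ℝ. Then for every t ∈ I and x ∈ ℝ, at the point (T(t), x) one has ∂_τ v + ε ∂_y(v^m) + (ε f(t)/g(t)) ∂_y^3(v^n) = 0 (the derivatives of v being taken in its own variables (τ, y)). Thus the transformation t̃ = ε∫g dt, x̃ = x, ũ = u maps the class u_t + g(t)(u^m)_x + f(t)(u^n)_xxx = 0 into the class ũ_t̃ + ε(ũ^m)_x̃ + f̃(t̃)(ũ^n)_x̃x̃x̃ = 0 with f̃ ∘ T = ε f/g. -/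
open Real

noncomputable def pdT (u : ℝ → ℝ → ℝ) (t x : ℝ) : ℝ := deriv (fun s => u s x) t
noncomputable def pdX (u : ℝ → ℝ → ℝ) (t x : ℝ) : ℝ := deriv (fun y => u t y) x
noncomputable def pdX3 (u : ℝ → ℝ → ℝ) (t x : ℝ) : ℝ := deriv (deriv (deriv (fun y => u t y))) x

/-- Reduction of `u_t + g(t)(u^m)_x + f(t)(u^n)_xxx = 0` to the class with `g = ε`
via `t̃ = ε ∫ g dt`, `x̃ = x`, `ũ = u`, with `f̃ ∘ T = ε f / g`. -/
theorem reduction_general_class_to_epsilon_class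
    (m n : ℝ) (hn : n ≠ 0) (ε : ℝ) (hε : ε = 1 ∨ ε = -1)
    (I : Set ℝ) (hIopen : IsOpen I) (hIconn : I.OrdConnected)
    (f g : ℝ → ℝ) (hf : ContDiff ℝ (⊤ : ℕ∞) f) (hg : ContDiff ℝ (⊤ : ℕ∞) g)
    (hg0 : ∀ t ∈ I, g t ≠ 0)
    (T : ℝ → ℝ) (hT : ContDiff ℝ (⊤ : ℕ∞) T) (hT' : ∀ t ∈ I, deriv T t = ε * g t)
    (u : ℝ → ℝ → ℝ) (hu : ContDiff ℝ (⊤ : ℕ∞) (Function.uncurry u))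
    (hupos : ∀ t ∈ I, ∀ x : ℝ, 0 < u t x)
    (hupde : ∀ t ∈ I, ∀ x : ℝ,
      pdT u t x + g t * pdX (fun t x => u t x ^ m) t x
        + f t * pdX3 (fun t x => u t x ^ n) t x = 0)
    (v : ℝ → ℝ → ℝ) (hv : ContDiff ℝ (⊤ : ℕ∞) (Function.uncurry v))
    (hvu : ∀ t ∈ I, ∀ x : ℝ, v (T t) x = u t x) :
    ∀ t ∈ I, ∀ x : ℝ,
      pdT v (T t) x + ε * pdX (fun τ y => v τ y ^ m) (T t) x
        + (ε * f t / g t) * pdX3 (fun τ y => v τ y ^ n) (T t) x = 0 := by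
  intro t ht x
  have hxeq : (fun y => v (T t) y) = (fun y => u t y) := funext (hvu t ht)
  have hm : (fun y : ℝ => v (T t) y ^ m) = (fun y => u t y ^ m) := by
    funext y; rw [hvu t ht y]
  have hnn : (fun y : ℝ => v (T t) y ^ n) = (fun y => u t y ^ n) := by
    funext y; rw [hvu t ht y]
  have hXm : pdX (fun τ y => v τ y ^ m) (T t) x = pdX (fun t x => u t x ^ m) t x := by
    unfold pdX; rw [hm]
  have hXn : pdX3 (fun τ y => v τ y ^ n) (T t) x = pdX3 (fun t x => u t x ^ n) t x := by
    unfold pdX3; rw [hnn]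
  -- temporal derivative via chain rule
  have hdv : DifferentiableAt ℝ (fun s => v s x) (T t) := by
    have h1 : Differentiable ℝ (Function.uncurry v) := hv.differentiable (by simp)
    exact (h1 (T t, x)).comp (T t) (show DifferentiableAt ℝ (fun s : ℝ => (s, x)) (T t) from differentiableAt_id.prodMk (differentiableAt_const x))
  have hdT : DifferentiableAt ℝ T t := (hT.differentiable (by simp)) t
  have hchain : deriv (fun s => v (T s) x) t
      = deriv (fun s => v s x) (T t) * deriv T t := by
    exact deriv_comp (x := t) hdv hdT
  have hloc : deriv (fun s => v (T s) x) t = deriv (fun s => u s x) t := by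
    apply Filter.EventuallyEq.deriv_eq
    filter_upwards [hIopen.mem_nhds ht] with s hs using hvu s hs x
  have hTeq : pdT u t x = pdT v (T t) x * (ε * g t) := by
    unfold pdT
    rw [← hloc, hchain, hT' t ht]
  have hpde := hupde t ht x
  rw [hTeq] at hpde
  rw [hXm, hXn]
  have hg' := hg0 t ht
  have hε2 : ε * ε = 1 := by rcases hε with h | h <;> rw [h] <;> norm_num
  have hεne : ε ≠ 0 := by rcases hε with h | h <;> rw [h] <;> norm_num
  rcases hε with h | h <;> subst h <;> field_simp <;>
    [linear_combination hpde; linear_combination -hpde]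
end

section
/- (Theorem 1: the usual equivalence group G∼.) Let m, n ∈ ℝ with n ≠ 0, ε = ±1, e ∈ {1, -1}, and let δ₀, δ₁, δ₂, δ₃ be real constants with δ₁ ≠ 0 and δ₃ > 0. Let f : ℝ → ℝ be nonvanishing, and suppose u : ℝ → ℝ → ℝ is smooth, positive, and satisfies ∂_t u + ε ∂_x(u^m) + f(t) ∂_x^3(u^n) = 0 on ℝ × ℝ. Define v : ℝ → ℝ → ℝ by v(τ, y) = δ₃ · u(e·δ₁^{-1}·δ₃^{m-1}·(τ - δ₀), (y - δ₂)/δ₁), and define f̃ : ℝ → ℝ by f̃(e·δ₁·δ₃^{1-m}·t + δ₀) = e·δ₁²·δ₃^{m-n}·f(t). Then v is smooth, positive, and satisfies ∂_τ v + (e·ε) ∂_y(v^m) + f̃(τ) ∂_y^3(v^n) = 0 on ℝ × ℝ; that is, the point transformation t̃ = e·δ₁·δ₃^{1-m}·t + δ₀, x̃ = δ₁x + δ₂, ũ = δ₃u maps any equation of the class to the equation with arbitrary elements f̃ = e·δ₁²·δ₃^{m-n}·f, ε̃ = e·ε, ñ = n, m̃ = m. -/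
open Real

lemma deriv_const_mul_comp (F : ℝ → ℝ) (hF : Differentiable ℝ F) (A k : ℝ)
    (L : ℝ → ℝ) (hL : ∀ z, HasDerivAt L k z) :
    deriv (fun z => A * F (L z)) = fun z => A * k * deriv F (L z) := by
  funext z
  have h : HasDerivAt (fun z => A * F (L z)) (A * (deriv F (L z) * k)) z :=
    (((hF (L z)).hasDerivAt.comp z (hL z))).const_mul A
  rw [h.deriv]; ring

lemma contDiff_rpow_comp (w : ℝ → ℝ) (hw : ContDiff ℝ (⊤ : ℕ∞) w)
    (hpos : ∀ z, 0 < w z) (p : ℝ) :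
    ContDiff ℝ (⊤ : ℕ∞) fun z => w z ^ p := by
  rw [contDiff_iff_contDiffAt]
  intro z
  exact hw.contDiffAt.rpow_const_of_ne (hpos z).ne'

lemma diff_of_top (g : ℝ → ℝ) (hg : ContDiff ℝ (⊤:ℕ∞) g) : Differentiable ℝ g :=
  hg.differentiable (by simp)

lemma contDiff_deriv' (g : ℝ → ℝ) (hg : ContDiff ℝ (⊤:ℕ∞) g) : ContDiff ℝ (⊤:ℕ∞) (deriv g) :=
  (contDiff_infty_iff_deriv.1 hg).2

/-- Theorem 1: the usual equivalence group `G∼` of the class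
`u_t + ε(u^m)_x + f(t)(u^n)_xxx = 0`. -/
theorem usual_equivalence_group
    (m n : ℝ) (hn : n ≠ 0) (ε e : ℝ) (hε : ε = 1 ∨ ε = -1) (he : e = 1 ∨ e = -1)
    (δ0 δ1 δ2 δ3 : ℝ) (hδ1 : δ1 ≠ 0) (hδ3 : 0 < δ3)
    (f ftil : ℝ → ℝ) (hf : ∀ t : ℝ, f t ≠ 0)
    (u : ℝ → ℝ → ℝ) (hu : ContDiff ℝ (⊤ : ℕ∞) (Function.uncurry u))
    (hupos : ∀ t x : ℝ, 0 < u t x)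
    (hupde : ∀ t x : ℝ,
      pdT u t x + ε * pdX (fun t x => u t x ^ m) t x
        + f t * pdX3 (fun t x => u t x ^ n) t x = 0)
    (v : ℝ → ℝ → ℝ)
    (hv : ∀ τ y : ℝ, v τ y = δ3 * u (e * δ1⁻¹ * δ3 ^ (m - 1) * (τ - δ0)) ((y - δ2) / δ1))
    (hftil : ∀ t : ℝ, ftil (e * δ1 * δ3 ^ (1 - m) * t + δ0) = e * δ1 ^ 2 * δ3 ^ (m - n) * f t) :
    ContDiff ℝ (⊤ : ℕ∞) (Function.uncurry v) ∧ (∀ τ y : ℝ, 0 < v τ y) ∧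
      ∀ τ y : ℝ,
        pdT v τ y + (e * ε) * pdX (fun τ y => v τ y ^ m) τ y
          + ftil τ * pdX3 (fun τ y => v τ y ^ n) τ y = 0 := by
  set a : ℝ := e * δ1⁻¹ * δ3 ^ (m - 1) with ha
  have he2 : e * e = 1 := by rcases he with h | h <;> simp [h]
  -- smoothness of v
  have hvfun : Function.uncurry v
      = fun p : ℝ × ℝ => δ3 * Function.uncurry u (a * (p.1 - δ0), (p.2 - δ2) / δ1) := by
    funext p; exact hv p.1 p.2
  have hsmooth : ContDiff ℝ (⊤ : ℕ∞) (Function.uncurry v) := by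
    rw [hvfun]
    exact contDiff_const.mul (hu.comp
      ((contDiff_const.mul (contDiff_fst.sub contDiff_const)).prodMk
        ((contDiff_snd.sub contDiff_const).div_const δ1)))
  refine ⟨hsmooth, fun τ y => by rw [hv]; exact mul_pos hδ3 (hupos _ _), ?_⟩
  intro τ y
  set t : ℝ := a * (τ - δ0) with ht
  set c : ℝ := (y - δ2) / δ1 with hc
  -- slices of u are smooth
  have hg : ContDiff ℝ (⊤ : ℕ∞) (fun s => u s c) :=
    hu.comp (contDiff_id.prodMk contDiff_const)
  have hw : ContDiff ℝ (⊤ : ℕ∞) (fun z => u t z) :=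
    hu.comp (contDiff_const.prodMk contDiff_id)
  have hW : ContDiff ℝ (⊤ : ℕ∞) (fun z => u t z ^ m) :=
    contDiff_rpow_comp _ hw (fun z => hupos t z) m
  have hN : ContDiff ℝ (⊤ : ℕ∞) (fun z => u t z ^ n) :=
    contDiff_rpow_comp _ hw (fun z => hupos t z) n
  -- affine maps
  have hL1 : ∀ s : ℝ, HasDerivAt (fun s : ℝ => a * (s - δ0)) a s := fun s => by
    simpa using ((hasDerivAt_id s).sub_const δ0).const_mul a
  have hL2 : ∀ z : ℝ, HasDerivAt (fun z : ℝ => (z - δ2) / δ1) (1 / δ1) z := fun z => by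
    simpa using ((hasDerivAt_id z).sub_const δ2).div_const δ1
  -- term 1
  have hT : pdT v τ y = δ3 * a * deriv (fun s => u s c) t := by
    have h1 : (fun s => v s y) = fun s => δ3 * (fun s' => u s' c) (a * (s - δ0)) := by
      funext s; exact hv s y
    rw [pdT, h1, deriv_const_mul_comp _ (diff_of_top _ hg) δ3 a _ hL1]
  -- term 2
  have hXm : pdX (fun τ y => v τ y ^ m) τ y
      = δ3 ^ m * (1 / δ1) * deriv (fun z => u t z ^ m) c := by
    have h1 : (fun z => v τ z ^ m)
        = fun z => δ3 ^ m * (fun z' => u t z' ^ m) ((z - δ2) / δ1) := by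
      funext z
      rw [hv, Real.mul_rpow hδ3.le (hupos _ _).le]
    rw [pdX, h1, deriv_const_mul_comp _ (diff_of_top _ hW) _ _ _ hL2]
  -- term 3
  have hXn : pdX3 (fun τ y => v τ y ^ n) τ y
      = δ3 ^ n * (1 / δ1) * (1 / δ1) * (1 / δ1)
        * deriv (deriv (deriv (fun z => u t z ^ n))) c := by
    have h1 : (fun z => v τ z ^ n)
        = fun z => δ3 ^ n * (fun z' => u t z' ^ n) ((z - δ2) / δ1) := by
      funext z
      rw [hv, Real.mul_rpow hδ3.le (hupos _ _).le]
    rw [pdX3, h1, deriv_const_mul_comp _ (diff_of_top _ hN) _ _ _ hL2,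
      deriv_const_mul_comp _ (diff_of_top _ (contDiff_deriv' _ hN)) _ _ _ hL2,
      deriv_const_mul_comp _ (diff_of_top _ (contDiff_deriv' _ (contDiff_deriv' _ hN)))
        _ _ _ hL2]
  -- ftil value
  have hft : ftil τ = e * δ1 ^ 2 * δ3 ^ (m - n) * f t := by
    have harg : e * δ1 * δ3 ^ (1 - m) * t + δ0 = τ := by
      have r3 : δ3 ^ (1 - m) * δ3 ^ (m - 1) = 1 := by
        rw [← Real.rpow_add hδ3]; norm_num
      have : e * δ1 * δ3 ^ (1 - m) * t
          = (e * e) * (δ1 * δ1⁻¹) * (δ3 ^ (1 - m) * δ3 ^ (m - 1)) * (τ - δ0) := by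
        rw [ht, ha]; ring
      rw [this, he2, mul_inv_cancel₀ hδ1, r3]; ring
    rw [← harg, hftil]
  -- assemble
  have key := hupde t c
  rw [pdT, pdX, pdX3] at key
  rw [hT, hXm, hXn, hft, ha]
  have r1 : δ3 * δ3 ^ (m - 1) = δ3 ^ m := by
    nth_rewrite 1 [← Real.rpow_one δ3]
    rw [← Real.rpow_add hδ3]; norm_num
  have r2 : δ3 ^ (m - n) * δ3 ^ n = δ3 ^ m := by
    rw [← Real.rpow_add hδ3]; norm_num
  field_simp
  linear_combination (e * δ3 ^ m) * key
    + (e * deriv (fun s => u s c) t) * r1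
    + (e * f t * deriv (deriv (deriv fun z => u t z ^ n)) c) * r2
end

section
/- (Theorem 2: conditional equivalence group for m = 0.) Let n ∈ ℝ with n ≠ 0, let δ₁, δ₂, δ₃ be real constants with δ₁ ≠ 0, δ₃ > 0, let I ⊆ ℝ be an open interval, let T : ℝ → ℝ be smooth with T'(t) ≠ 0 on I, and let f : ℝ → ℝ be nonvanishing on I. Suppose u : ℝ → ℝ → ℝ is smooth, positive on I × ℝ, and satisfies ∂_t u + f(t) ∂_x^3(u^n) = 0 on I × ℝ, and suppose v : ℝ → ℝ → ℝ is smooth with v(T(t), δ₁x + δ₂) = δ₃·u(t, x) for all t ∈ I, x ∈ ℝ. Then for every t ∈ I and x ∈ ℝ, at the point (T(t), δ₁x + δ₂) one has ∂_τ v + f̃(τ) ∂_y^3(v^n) = 0, where f̃(T(t)) = δ₁³·δ₃^{1-n}·f(t)/T'(t). Thus t̃ = T(t), x̃ = δ₁x + δ₂, ũ = δ₃u, f̃ = δ₁³δ₃^{1-n} f / T_t is an equivalence transformation of the subclass u_t + f(t)(u^n)_xxx = 0, for every smooth strictly monotone T. -/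
open Real

lemma deriv_comp_affine (F : ℝ → ℝ) (hF : Differentiable ℝ F) (a b : ℝ) :
    deriv (fun z => F (a * z + b)) = fun z => a * deriv F (a * z + b) := by
  funext z
  have h : HasDerivAt (fun z => F (a * z + b)) (deriv F (a * z + b) * (a * 1)) z :=
    (hF (a * z + b)).hasDerivAt.comp z (((hasDerivAt_id z).const_mul a).add_const b)
  rw [h.deriv]; ring

lemma deriv_c_affine (F : ℝ → ℝ) (hF : Differentiable ℝ F) (c a b : ℝ) :
    deriv (fun z => c * F (a * z + b)) = fun z => (c * a) * deriv F (a * z + b) := by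
  funext z
  rw [deriv_const_mul_field, deriv_comp_affine F hF a b]; ring

lemma third_deriv_affine (F : ℝ → ℝ) (hF : ContDiff ℝ (⊤ : ℕ∞) F) (c a b y : ℝ) :
    deriv (deriv (deriv (fun z => c * F (a * z + b)))) y
      = c * a ^ 3 * deriv (deriv (deriv F)) (a * y + b) := by
  have hF' : ContDiff ℝ (⊤ : ℕ∞) (deriv F) := (contDiff_infty_iff_deriv.mp hF).2
  have hF'' : ContDiff ℝ (⊤ : ℕ∞) (deriv (deriv F)) := (contDiff_infty_iff_deriv.mp hF').2
  rw [deriv_c_affine F (hF.differentiable (by simp)) c a b,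
    deriv_c_affine (deriv F) (hF'.differentiable (by simp)) (c * a) a b,
    deriv_c_affine (deriv (deriv F)) (hF''.differentiable (by simp)) (c * a * a) a b]
  ring

/-- Theorem 2: the conditional equivalence group `G∼_(n,0)` of the subclass
`u_t + f(t)(u^n)_xxx = 0` (the case `m = 0`). -/
theorem conditional_equivalence_group_m_eq_zero
    (n : ℝ) (hn : n ≠ 0) (δ1 δ2 δ3 : ℝ) (hδ1 : δ1 ≠ 0) (hδ3 : 0 < δ3)
    (I : Set ℝ) (hIopen : IsOpen I) (hIconn : I.OrdConnected)
    (T : ℝ → ℝ) (hT : ContDiff ℝ (⊤ : ℕ∞) T) (hT' : ∀ t ∈ I, deriv T t ≠ 0)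
    (f ftil : ℝ → ℝ) (hf : ∀ t ∈ I, f t ≠ 0)
    (u : ℝ → ℝ → ℝ) (hu : ContDiff ℝ (⊤ : ℕ∞) (Function.uncurry u))
    (hupos : ∀ t ∈ I, ∀ x : ℝ, 0 < u t x)
    (hupde : ∀ t ∈ I, ∀ x : ℝ,
      pdT u t x + f t * pdX3 (fun t x => u t x ^ n) t x = 0)
    (v : ℝ → ℝ → ℝ) (hv : ContDiff ℝ (⊤ : ℕ∞) (Function.uncurry v))
    (hvu : ∀ t ∈ I, ∀ x : ℝ, v (T t) (δ1 * x + δ2) = δ3 * u t x)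
    (hftil : ∀ t ∈ I, ftil (T t) = δ1 ^ 3 * δ3 ^ (1 - n) * f t / deriv T t) :
    ∀ t ∈ I, ∀ x : ℝ,
      pdT v (T t) (δ1 * x + δ2)
        + ftil (T t) * pdX3 (fun τ y => v τ y ^ n) (T t) (δ1 * x + δ2) = 0 := by
  intro t ht x
  set y₀ : ℝ := δ1 * x + δ2 with hy₀
  -- spatial smoothness of x ↦ u t x ^ n
  have hut : ContDiff ℝ (⊤ : ℕ∞) (fun z => u t z) :=
    hu.comp (contDiff_const.prodMk contDiff_id)
  have hF : ContDiff ℝ (⊤ : ℕ∞) (fun z => u t z ^ n) := by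
    rw [contDiff_iff_contDiffAt]
    intro z
    exact (hut.contDiffAt).rpow_const_of_ne (ne_of_gt (hupos t ht z))
  -- time derivative of v
  have hφ : ContDiff ℝ (⊤ : ℕ∞) (fun s => v s y₀) :=
    hv.comp (contDiff_id.prodMk contDiff_const)
  have hTt : HasDerivAt T (deriv T t) t :=
    ((hT.differentiable (by simp)) t).hasDerivAt
  have hφt : HasDerivAt (fun s => v s y₀) (pdT v (T t) y₀) (T t) := by
    have := ((hφ.differentiable (by simp)) (T t)).hasDerivAt
    simpa [pdT] using this
  have hcomp : HasDerivAt (fun s => v (T s) y₀) (pdT v (T t) y₀ * deriv T t) t :=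
    hφt.comp t hTt
  have heq : (fun s => v (T s) y₀) =ᶠ[nhds t] (fun s => δ3 * u s x) := by
    filter_upwards [hIopen.mem_nhds ht] with s hs
    exact hvu s hs x
  have hder1 : pdT v (T t) y₀ * deriv T t = δ3 * pdT u t x := by
    have h1 : deriv (fun s => v (T s) y₀) t = deriv (fun s => δ3 * u s x) t :=
      heq.deriv_eq
    rw [hcomp.deriv] at h1
    rw [h1, deriv_const_mul_field]; rfl
  -- spatial relation
  have hveq : (fun y => v (T t) y ^ n)
      = fun y => δ3 ^ n * (fun z => u t z ^ n) (δ1⁻¹ * y + -(δ2 / δ1)) := by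
    funext y
    have harg : δ1 * ((δ1⁻¹ * y + -(δ2 / δ1))) + δ2 = y := by field_simp; ring
    have h2 := hvu t ht (δ1⁻¹ * y + -(δ2 / δ1))
    rw [harg] at h2
    simp only [h2]
    rw [Real.mul_rpow hδ3.le (hupos t ht _).le]
  -- compute pdX3 of v^n
  have hX3 : pdX3 (fun τ y => v τ y ^ n) (T t) y₀
      = δ3 ^ n * δ1⁻¹ ^ 3 * pdX3 (fun t x => u t x ^ n) t x := by
    have : pdX3 (fun τ y => v τ y ^ n) (T t) y₀
        = deriv (deriv (deriv (fun y => v (T t) y ^ n))) y₀ := rfl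
    rw [this, hveq, third_deriv_affine _ hF (δ3 ^ n) δ1⁻¹ (-(δ2 / δ1)) y₀]
    have harg2 : δ1⁻¹ * y₀ + -(δ2 / δ1) = x := by rw [hy₀]; field_simp; ring
    rw [harg2]; rfl
  have key := hupde t ht x
  have hδ3' : δ3 ^ (1 - n) * δ3 ^ n = δ3 := by
    rw [← Real.rpow_add hδ3]; norm_num
  have hTne := hT' t ht
  rw [hX3, hftil t ht]
  field_simp
  set A := pdT u t x
  set B := pdX3 (fun t x => u t x ^ n) t x
  have hδpow : δ1 ^ 3 * δ1⁻¹ ^ 3 = 1 := by field_simp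
  have hvA : pdT v (T t) y₀ = δ3 * A / deriv T t := by
    field_simp [eq_div_iff hTne]
    linarith [hder1]
  rw [hvA]
  field_simp
  linear_combination δ3 * key + (f t * B) * hδ3'
end

section
/- (Theorem 4: conditional equivalence group for n = 1, m = 2.) Let ε = ±1, e ∈ {1, -1}, and let α, β, γ, δ, κ, μ₁, μ₀ be real constants with κ·(αδ - βγ) ≠ 0. Let I ⊆ ℝ be an open interval on which γt + δ ≠ 0, and let f : ℝ → ℝ be nonvanishing on I. Suppose u : ℝ → ℝ → ℝ is smooth and satisfies ∂_t u + ε ∂_x(u²) + f(t) ∂_x^3 u = 0 on I × ℝ, and suppose v : ℝ → ℝ → ℝ is smooth with v((αt + β)/(γt + δ), (κx + μ₁t + μ₀)/(γt + δ)) = e·(2εκ(γt + δ)·u(t,x) - κγx + μ₁δ - μ₀γ)/(2ε(αδ - βγ)) for all t ∈ I, x ∈ ℝ. Then for every t ∈ I and x ∈ ℝ, at the point (τ, y) = ((αt + β)/(γt + δ), (κx + μ₁t + μ₀)/(γt + δ)) one has ∂_τ v + (e·ε) ∂_y(v²) + f̃(τ) ∂_y^3 v = 0, where f̃((αt + β)/(γt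 + δ)) = κ³·f(t)/((αδ - βγ)(γt + δ)). -/
open Real

lemma hasDerivAt_affcomb (F : ℝ → ℝ) (hF : Differentiable ℝ F) (A s r B C y : ℝ) :
    HasDerivAt (fun z => A * F (s * z + r) + B * z + C)
      (A * s * deriv F (s * y + r) + B) y := by
  have h1 : HasDerivAt (fun z : ℝ => s * z + r) s y := by
    simpa using ((hasDerivAt_id y).const_mul s).add_const r
  have h2 := (hF (s * y + r)).hasDerivAt
  have h3 : HasDerivAt (fun z : ℝ => F (s * z + r)) (deriv F (s * y + r) * s) y :=
    h2.comp y h1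
  have h4 : HasDerivAt (fun z : ℝ => B * z + C) B y := by
    simpa using ((hasDerivAt_id y).const_mul B).add_const C
  have h5 := (h3.const_mul A).add h4
  have h6 : A * s * deriv F (s * y + r) + B = A * (deriv F (s * y + r) * s) + B := by ring
  rw [h6]; exact h5.congr_of_eventuallyEq (Filter.Eventually.of_forall fun z => by simp only [Pi.add_apply]; ring)

lemma deriv_affcomb (F : ℝ → ℝ) (hF : Differentiable ℝ F) (A s r B C : ℝ) :
    deriv (fun z => A * F (s * z + r) + B * z + C)
      = fun z => A * s * deriv F (s * z + r) + B := by
  funext z; exact (hasDerivAt_affcomb F hF A s r B C z).deriv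

set_option maxHeartbeats 1000000 in
lemma final_algebra (ε e α β γ δ κ μ1 μ0 t x u0 u1 u3 ft : ℝ)
    (hε : ε = 1 ∨ ε = -1) (he : e = 1 ∨ e = -1)
    (hΔ : α * δ - β * γ ≠ 0) (hD : γ * t + δ ≠ 0) (hκ0 : κ ≠ 0)
    (A B2 s Tv Xv c1 : ℝ)
    (hA : A = e * κ * (γ * t + δ) / (α * δ - β * γ))
    (hB2 : B2 = -(e * γ * (γ * t + δ)) / (2 * ε * (α * δ - β * γ)))
    (hs : s = (γ * t + δ) / κ)
    (hTv : Tv = (α * (γ * t + δ) - (α * t + β) * γ) / (γ * t + δ) ^ 2)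
    (hXv : Xv = (μ1 * (γ * t + δ) - (κ * x + μ1 * t + μ0) * γ) / (γ * t + δ) ^ 2)
    (hc1 : c1 = e * κ / (α * δ - β * γ)) :
    c1 * (γ * u0 + (γ * t + δ) * (-(ε * (2 * u0 * u1)) - ft * u3)) - Xv * (A * s * u1 + B2)
      + Tv * (e * ε * (2 * (e * (2 * ε * κ * (γ * t + δ) * u0 - κ * γ * x + μ1 * δ - μ0 * γ)
          / (2 * ε * (α * δ - β * γ))) * (A * s * u1 + B2)))
      + Tv * (κ ^ 3 * ft / ((α * δ - β * γ) * (γ * t + δ)) * (A * s * s * s * u3)) = 0 := by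
  subst hA hB2 hs hTv hXv hc1
  rcases hε with h | h <;> rcases he with h' | h' <;> subst h <;> subst h' <;>
    field_simp <;> ring


set_option maxHeartbeats 2000000 in
/-- Theorem 4: the conditional equivalence group `G∼_(1,2)` of the subclass
`u_t + ε(u²)_x + f(t) u_xxx = 0` (the case `n = 1`, `m = 2`). -/
theorem conditional_equivalence_group_n1_m2
    (ε e : ℝ) (hε : ε = 1 ∨ ε = -1) (he : e = 1 ∨ e = -1)
    (α β γ δ κ μ1 μ0 : ℝ) (hκ : κ * (α * δ - β * γ) ≠ 0)
    (I : Set ℝ) (hIopen : IsOpen I) (hIconn : I.OrdConnected)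
    (hden : ∀ t ∈ I, γ * t + δ ≠ 0)
    (f ftil : ℝ → ℝ) (hf : ∀ t ∈ I, f t ≠ 0)
    (u : ℝ → ℝ → ℝ) (hu : ContDiff ℝ (⊤ : ℕ∞) (Function.uncurry u))
    (hupde : ∀ t ∈ I, ∀ x : ℝ,
      pdT u t x + ε * pdX (fun t x => u t x ^ 2) t x + f t * pdX3 u t x = 0)
    (v : ℝ → ℝ → ℝ) (hv : ContDiff ℝ (⊤ : ℕ∞) (Function.uncurry v))
    (hvu : ∀ t ∈ I, ∀ x : ℝ,
      v ((α * t + β) / (γ * t + δ)) ((κ * x + μ1 * t + μ0) / (γ * t + δ))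
        = e * (2 * ε * κ * (γ * t + δ) * u t x - κ * γ * x + μ1 * δ - μ0 * γ)
            / (2 * ε * (α * δ - β * γ)))
    (hftil : ∀ t ∈ I,
      ftil ((α * t + β) / (γ * t + δ))
        = κ ^ 3 * f t / ((α * δ - β * γ) * (γ * t + δ))) :
    ∀ t ∈ I, ∀ x : ℝ,
      pdT v ((α * t + β) / (γ * t + δ)) ((κ * x + μ1 * t + μ0) / (γ * t + δ))
        + (e * ε) * pdX (fun τ y => v τ y ^ 2) ((α * t + β) / (γ * t + δ))
            ((κ * x + μ1 * t + μ0) / (γ * t + δ))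
        + ftil ((α * t + β) / (γ * t + δ)) * pdX3 v ((α * t + β) / (γ * t + δ))
            ((κ * x + μ1 * t + μ0) / (γ * t + δ)) = 0 := by
  intro t ht x
  have hκ0 : κ ≠ 0 := fun h => hκ (by simp [h])
  have hΔ : α * δ - β * γ ≠ 0 := fun h => hκ (by simp [h])
  have hD : γ * t + δ ≠ 0 := hden t ht
  have hε0 : ε ≠ 0 := by rcases hε with h | h <;> simp [h]
  set τ := (α * t + β) / (γ * t + δ) with hτdef
  set y₀ := (κ * x + μ1 * t + μ0) / (γ * t + δ) with hy₀def
  -- the 1D functions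
  set U : ℝ → ℝ := fun z => u t z with hUdef
  have hUc : ContDiff ℝ (⊤ : ℕ∞) U := hu.comp (contDiff_const.prodMk contDiff_id)
  have hU1c : ContDiff ℝ (⊤ : ℕ∞) (deriv U) := (contDiff_infty_iff_deriv.mp hUc).2
  have hU2c : ContDiff ℝ (⊤ : ℕ∞) (deriv (deriv U)) := (contDiff_infty_iff_deriv.mp hU1c).2
  set u0 := u t x with hu0def
  set u1 := deriv U x with hu1def
  set u3 := deriv (deriv (deriv U)) x with hu3def
  set ut := pdT u t x with hutdef
  -- coefficients
  set A := e * κ * (γ * t + δ) / (α * δ - β * γ) with hAdef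
  set B2 := -(e * γ * (γ * t + δ)) / (2 * ε * (α * δ - β * γ)) with hB2def
  set C2 := e * (γ * (μ1 * t + μ0) + μ1 * δ - μ0 * γ) / (2 * ε * (α * δ - β * γ)) with hC2def
  set s := (γ * t + δ) / κ with hsdef
  set r := -(μ1 * t + μ0) / κ with hrdef
  have hsx : s * y₀ + r = x := by
    rw [hsdef, hy₀def, hrdef]; field_simp; ring
  -- the identity for fun y => v τ y
  have hg : (fun y => v τ y) = fun z => A * U (s * z + r) + B2 * z + C2 := by
    funext z
    have hz : (κ * (s * z + r) + μ1 * t + μ0) / (γ * t + δ) = z := by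
      rw [hsdef, hrdef]; field_simp; ring
    have := hvu t ht (s * z + r)
    rw [hz] at this
    rw [this, hAdef, hB2def, hC2def, hUdef, hsdef, hrdef]
    field_simp
    ring
  -- x-derivatives of v
  have hd1 : deriv (fun y => v τ y) = fun z => A * s * deriv U (s * z + r) + B2 := by
    rw [hg]; exact deriv_affcomb U (hUc.differentiable (by simp)) A s r B2 C2
  have hd1' : (fun z => A * s * deriv U (s * z + r) + B2)
      = fun z => (A * s) * deriv U (s * z + r) + 0 * z + B2 := by
    funext z; ring
  have hd2 : deriv (deriv (fun y => v τ y))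
      = fun z => A * s * s * deriv (deriv U) (s * z + r) + 0 := by
    rw [hd1, hd1', deriv_affcomb (deriv U) (hU1c.differentiable (by simp)) (A * s) s r 0 B2]
  have hd2' : (fun z => A * s * s * deriv (deriv U) (s * z + r) + 0)
      = fun z => (A * s * s) * deriv (deriv U) (s * z + r) + 0 * z + 0 := by
    funext z; ring
  have hd3 : deriv (deriv (deriv (fun y => v τ y)))
      = fun z => A * s * s * s * deriv (deriv (deriv U)) (s * z + r) + 0 := by
    rw [hd2, hd2',
      deriv_affcomb (deriv (deriv U)) (hU2c.differentiable (by simp)) (A * s * s) s r 0 0]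
  have hpdX3v : pdX3 v τ y₀ = A * s * s * s * u3 := by
    show deriv (deriv (deriv (fun y => v τ y))) y₀ = _
    rw [hd3]; simp only [hsx]; rw [hu3def]; ring
  -- value v τ y₀
  have hv0 : v τ y₀ = e * (2 * ε * κ * (γ * t + δ) * u0 - κ * γ * x + μ1 * δ - μ0 * γ)
      / (2 * ε * (α * δ - β * γ)) := hvu t ht x
  -- pdX of v² at (τ, y₀)
  have hvsq : pdX (fun τ y => v τ y ^ 2) τ y₀ = 2 * v τ y₀ * (A * s * u1 + B2) := by
    have hder : HasDerivAt (fun y => v τ y) (A * s * u1 + B2) y₀ := by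
      have := hasDerivAt_affcomb U (hUc.differentiable (by simp)) A s r B2 C2 y₀
      rw [hsx] at this
      rw [hg]; exact this
    have := (hder.pow 2).deriv
    show deriv (fun y => v τ y ^ 2) y₀ = _
    rw [show (fun y => v τ y ^ 2) = (fun y => v τ y) ^ 2 from rfl, this]; ring
  have hpdXv : pdX v τ y₀ = A * s * u1 + B2 := by
    show deriv (fun y => v τ y) y₀ = _
    rw [hd1]; simp only [hsx]; rfl
  -- pdX of u² and the PDE at (t,x)
  have hUd : HasDerivAt U u1 x := ((hUc.differentiable (by simp)) x).hasDerivAt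
  have husq : pdX (fun t x => u t x ^ 2) t x = 2 * u0 * u1 := by
    have h := (hUd.pow 2).deriv
    show deriv (fun y => u t y ^ 2) x = _
    rw [show (fun y => u t y ^ 2) = U ^ 2 from rfl, h]
    norm_num [hUdef]
    exact Or.inl rfl
  have hpde : ut + ε * (2 * u0 * u1) + f t * u3 = 0 := by
    have h := hupde t ht x
    rw [husq] at h
    have e3 : pdX3 u t x = u3 := rfl
    have e1 : pdT u t x = ut := rfl
    rw [e3, e1] at h
    exact h
  have hden' : HasDerivAt (fun z : ℝ => γ * z + δ) γ t := by
    simpa using ((hasDerivAt_id t).const_mul γ).add_const δ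
  have hnum : HasDerivAt (fun z : ℝ => α * z + β) α t := by
    simpa using ((hasDerivAt_id t).const_mul α).add_const β
  have hT : HasDerivAt (fun z : ℝ => (α * z + β) / (γ * z + δ))
      ((α * (γ * t + δ) - (α * t + β) * γ) / (γ * t + δ) ^ 2) t := hnum.div hden' hD
  have hXnum : HasDerivAt (fun z : ℝ => κ * x + μ1 * z + μ0) μ1 t := by
    simpa using (((hasDerivAt_id t).const_mul μ1).const_add (κ * x)).add_const μ0
  have hX : HasDerivAt (fun z : ℝ => (κ * x + μ1 * z + μ0) / (γ * z + δ))
      ((μ1 * (γ * t + δ) - (κ * x + μ1 * t + μ0) * γ) / (γ * t + δ) ^ 2) t :=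
    hXnum.div hden' hD
  set Tv := (α * (γ * t + δ) - (α * t + β) * γ) / (γ * t + δ) ^ 2 with hTvdef
  set Xv := (μ1 * (γ * t + δ) - (κ * x + μ1 * t + μ0) * γ) / (γ * t + δ) ^ 2 with hXvdef
  have hvdiff : Differentiable ℝ (Function.uncurry v) :=
    hv.differentiable (by simp)
  have hL : HasFDerivAt (Function.uncurry v) (fderiv ℝ (Function.uncurry v) (τ, y₀)) (τ, y₀) :=
    (hvdiff (τ, y₀)).hasFDerivAt
  set L := fderiv ℝ (Function.uncurry v) (τ, y₀) with hLdef
  have hF : HasDerivAt (fun z : ℝ => v ((α * z + β) / (γ * z + δ)) ((κ * x + μ1 * z + μ0) / (γ * z + δ)))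
      (L (Tv, Xv)) t := by have := hL.comp_hasDerivAt t (hT.prodMk hX); exact this
  have hpdTv : pdT v τ y₀ = L (1, 0) := by
    have h := hL.comp_hasDerivAt τ ((hasDerivAt_id τ).prodMk (hasDerivAt_const τ y₀))
    exact h.deriv
  have hpdXv2 : pdX v τ y₀ = L (0, 1) := by
    have h := hL.comp_hasDerivAt y₀ ((hasDerivAt_const y₀ τ).prodMk (hasDerivAt_id y₀))
    exact h.deriv
  have hL01 : L (0, 1) = A * s * u1 + B2 := by rw [← hpdXv2, hpdXv]
  have hlin : L (Tv, Xv) = Tv * L (1, 0) + Xv * L (0, 1) := by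
    have hsp : ((Tv, Xv) : ℝ × ℝ) = Tv • ((1:ℝ), (0:ℝ)) + Xv • ((0:ℝ), (1:ℝ)) := by
      simp [Prod.ext_iff]
    rw [hsp, map_add, map_smul, map_smul, smul_eq_mul, smul_eq_mul]
  set c1 := e * κ / (α * δ - β * γ) with hc1def
  set c0 := e * (-(κ * γ * x) + μ1 * δ - μ0 * γ) / (2 * ε * (α * δ - β * γ)) with hc0def
  have hux : HasDerivAt (fun z => u z x) ut t := by
    have hdiff : Differentiable ℝ (fun z => u z x) :=
      (hu.differentiable (by simp)).comp
        (differentiable_id.prodMk (differentiable_const x))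
    exact (hdiff t).hasDerivAt
  have hP : HasDerivAt (fun z => (γ * z + δ) * u z x)
      (γ * u t x + (γ * t + δ) * ut) t := hden'.mul hux
  have hR0 : HasDerivAt (fun z => c1 * ((γ * z + δ) * u z x) + c0)
      (c1 * (γ * u0 + (γ * t + δ) * ut)) t := by
    have h := (hP.const_mul c1).add_const c0
    convert h using 1
  have hFeq : (fun z : ℝ => v ((α * z + β) / (γ * z + δ)) ((κ * x + μ1 * z + μ0) / (γ * z + δ)))
      =ᶠ[nhds t] (fun z => c1 * ((γ * z + δ) * u z x) + c0) := by
    filter_upwards [hIopen.mem_nhds ht] with z hz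
    rw [hvu z hz x, hc1def, hc0def]
    field_simp
    ring
  have hkey : L (Tv, Xv) = c1 * (γ * u0 + (γ * t + δ) * ut) := by
    calc L (Tv, Xv) = deriv (fun z : ℝ => v ((α * z + β) / (γ * z + δ))
          ((κ * x + μ1 * z + μ0) / (γ * z + δ))) t := hF.deriv.symm
      _ = deriv (fun z => c1 * ((γ * z + δ) * u z x) + c0) t := hFeq.deriv_eq
      _ = c1 * (γ * u0 + (γ * t + δ) * ut) := hR0.deriv
  have hTvne : Tv ≠ 0 := by
    rw [hTvdef]
    have h : α * (γ * t + δ) - (α * t + β) * γ = α * δ - β * γ := by ring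
    rw [h]
    exact div_ne_zero hΔ (pow_ne_zero 2 hD)
  have hL10 : L (1, 0) = (c1 * (γ * u0 + (γ * t + δ) * ut) - Xv * (A * s * u1 + B2)) / Tv := by
    rw [eq_div_iff hTvne, ← hL01]
    have h := hlin.symm.trans hkey
    linarith
  have hutval : ut = -(ε * (2 * u0 * u1)) - f t * u3 := by linarith
  have hft : ftil τ = κ ^ 3 * f t / ((α * δ - β * γ) * (γ * t + δ)) := hftil t ht
  rw [hvsq, hpdX3v, hft, hpdTv]
  have hTG : Tv * L (1, 0) = c1 * (γ * u0 + (γ * t + δ) * ut) - Xv * (A * s * u1 + B2) := by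
    have h := hlin.symm.trans hkey
    rw [hL01] at h
    linarith
  have hcancel : ∀ G : ℝ, Tv * G = 0 → G = 0 := by
    intro G hG
    rcases mul_eq_zero.mp hG with h | h
    · exact absurd h hTvne
    · exact h
  apply hcancel
  rw [mul_add, mul_add, hTG, hutval, hv0]
  exact final_algebra ε e α β γ δ κ μ1 μ0 t x u0 u1 u3 (f t) hε he hΔ hD hκ0
    A B2 s Tv Xv c1 hAdef hB2def hsdef hTvdef hXvdef hc1def
end

section
/- (Table 1, Case 2: scaling symmetry when m = (n+2)/3.) Let n ∈ ℝ with n ≠ 0 and n ≠ 1, set m = (n + 2)/3, let ε = ±1, let f : ℝ → ℝ be nonvanishing, and let s ∈ ℝ. Suppose u : ℝ → ℝ → ℝ is smooth, positive, and satisfies ∂_t u + ε ∂_x(u^m) + f(t) ∂_x^3(u^n) = 0 on ℝ × ℝ. Then the function v defined by v(t, x) = e^{3s/(n-1)} · u(t, e^{-s} x) is also smooth, positive, and satisfies the same equation ∂_t v + ε ∂_x(v^m) + f(t) ∂_x^3(v^n) = 0 on ℝ × ℝ. (This is the one-parameter symmetry group generated by the vector field x ∂_x + (3/(n-1)) u ∂_u.)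 -/
open Real

private lemma deriv_comp_scale (g : ℝ → ℝ) (hg : Differentiable ℝ g) (C a : ℝ) :
    deriv (fun y => C * g (a * y)) = fun x => (C * a) * deriv g (a * x) := by
  funext x
  have h1 : HasDerivAt (fun y : ℝ => a * y) a x := by
    simpa using (hasDerivAt_id x).const_mul a
  have h2 : HasDerivAt (fun y => g (a * y)) (deriv g (a * x) * a) x :=
    (hg (a * x)).hasDerivAt.comp x h1
  have h3 : HasDerivAt (fun y => C * g (a * y)) (C * (deriv g (a * x) * a)) x :=
    h2.const_mul C
  rw [h3.deriv]; ring

/-- Table 1, Case 2: the scaling symmetry generated by `x∂_x + (3/(n-1))u∂_u`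
when `m = (n+2)/3`. -/
theorem scaling_symmetry_m_eq_n_plus_two_div_three
    (n : ℝ) (hn : n ≠ 0) (hn1 : n ≠ 1) (m : ℝ) (hm : m = (n + 2) / 3)
    (ε : ℝ) (hε : ε = 1 ∨ ε = -1)
    (f : ℝ → ℝ) (hf : ∀ t : ℝ, f t ≠ 0) (s : ℝ)
    (u : ℝ → ℝ → ℝ) (hu : ContDiff ℝ (⊤ : ℕ∞) (Function.uncurry u))
    (hupos : ∀ t x : ℝ, 0 < u t x)
    (hupde : ∀ t x : ℝ,
      pdT u t x + ε * pdX (fun t x => u t x ^ m) t x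
        + f t * pdX3 (fun t x => u t x ^ n) t x = 0)
    (v : ℝ → ℝ → ℝ)
    (hv : ∀ t x : ℝ, v t x = Real.exp (3 * s / (n - 1)) * u t (Real.exp (-s) * x)) :
    ContDiff ℝ (⊤ : ℕ∞) (Function.uncurry v) ∧ (∀ t x : ℝ, 0 < v t x) ∧
      ∀ t x : ℝ,
        pdT v t x + ε * pdX (fun t x => v t x ^ m) t x
          + f t * pdX3 (fun t x => v t x ^ n) t x = 0 := by
  have hveq : v = fun t x => Real.exp (3 * s / (n - 1)) * u t (Real.exp (-s) * x) := by
    funext t x; exact hv t x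
  subst hveq
  set K : ℝ := 3 * s / (n - 1) with hK
  set c : ℝ := Real.exp K with hc
  set a : ℝ := Real.exp (-s) with ha
  have hn1' : n - 1 ≠ 0 := sub_ne_zero.mpr hn1
  have hcpos : 0 < c := Real.exp_pos _
  have hapos : 0 < a := Real.exp_pos _
  -- key exponent identities
  have hcm : c ^ m * a = c := by
    rw [hc, ha, ← Real.exp_mul, ← Real.exp_add, Real.exp_eq_exp, hK, hm]
    field_simp; ring
  have hcn : c ^ n * (a * a * a) = c := by
    rw [hc, ha, ← Real.exp_mul, ← Real.exp_add, ← Real.exp_add, ← Real.exp_add,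
      Real.exp_eq_exp, hK]
    field_simp; ring
  -- smoothness of slice maps
  have hslice : ∀ t : ℝ, ContDiff ℝ (⊤ : ℕ∞) (fun y => u t y) := fun t =>
    hu.comp ((contDiff_const (c := t)).prodMk contDiff_id)
  have hsliceT : ∀ x : ℝ, ContDiff ℝ (⊤ : ℕ∞) (fun τ => u τ x) := fun x =>
    hu.comp (contDiff_id.prodMk (contDiff_const (c := x)))
  have hpow : ∀ (p : ℝ) (t : ℝ), ContDiff ℝ (⊤ : ℕ∞) (fun y => u t y ^ p) := by
    intro p t
    rw [contDiff_iff_contDiffAt]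
    intro y
    exact (hslice t).contDiffAt.rpow_const_of_ne (ne_of_gt (hupos t y))
  refine ⟨?_, ?_, ?_⟩
  · exact contDiff_const.mul
      (hu.comp (contDiff_fst.prodMk (contDiff_const.mul contDiff_snd)))
  · intro t x; exact mul_pos hcpos (hupos t _)
  · intro t x
    -- term 1
    have hT : pdT (fun t x => c * u t (a * x)) t x = c * pdT u t (a * x) := by
      unfold pdT
      exact deriv_const_mul c ((hsliceT (a * x)).differentiable (by simp) t)
    -- generic third-order and first-order scaling for powers
    have hX : ∀ p : ℝ, pdX (fun t x => (c * u t (a * x)) ^ p) t x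
        = c ^ p * a * pdX (fun t x => u t x ^ p) t (a * x) := by
      intro p
      unfold pdX
      have he : (fun y => (c * u t (a * y)) ^ p) = fun y => c ^ p * (u t (a * y)) ^ p := by
        funext y; rw [Real.mul_rpow hcpos.le (hupos t _).le]
      rw [he, deriv_comp_scale _ (((hpow p t).differentiable (by simp))) (c ^ p) a]
    have hX3 : ∀ p : ℝ, pdX3 (fun t x => (c * u t (a * x)) ^ p) t x
        = c ^ p * (a * a * a) * pdX3 (fun t x => u t x ^ p) t (a * x) := by
      intro p
      unfold pdX3
      have he : (fun y => (c * u t (a * y)) ^ p) = fun y => c ^ p * (u t (a * y)) ^ p := by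
        funext y; rw [Real.mul_rpow hcpos.le (hupos t _).le]
      have hg0 : ContDiff ℝ (⊤ : ℕ∞) (fun y => u t y ^ p) := hpow p t
      have hg1 : ContDiff ℝ (⊤ : ℕ∞) (deriv (fun y => u t y ^ p)) :=
        (contDiff_infty_iff_deriv.mp hg0).2
      have hg2 : ContDiff ℝ (⊤ : ℕ∞) (deriv (deriv (fun y => u t y ^ p))) :=
        (contDiff_infty_iff_deriv.mp hg1).2
      rw [he, deriv_comp_scale _ (hg0.differentiable (by simp)) (c ^ p) a,
        deriv_comp_scale _ (hg1.differentiable (by simp)) (c ^ p * a) a,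
        deriv_comp_scale _ (hg2.differentiable (by simp)) (c ^ p * a * a) a]
      ring
    rw [hT, hX m, hX3 n, hcm, hcn]
    have := hupde t (a * x)
    nlinarith [this]
end

section
/- (Table 1, Case 5: scaling symmetry of the constant-coefficient K(m,n) equation.) Let m, n ∈ ℝ with n ≠ 0, let ε = ±1, and let s ∈ ℝ. Suppose u : ℝ → ℝ → ℝ is smooth, positive, and satisfies ∂_t u + ε ∂_x(u^m) + ∂_x^3(u^n) = 0 on ℝ × ℝ. Then the function v defined by v(t, x) = e^{-2s} · u(e^{-(3m-n-2)s} t, e^{-(m-n)s} x) is smooth, positive, and satisfies the same equation ∂_t v + ε ∂_x(v^m) + ∂_x^3(v^n) = 0 on ℝ × ℝ. (This is the one-parameter group generated by (3m-n-2) t ∂_t + (m-n) x ∂_x - 2u ∂_u.) -/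
open Real

private lemma scale_deriv (F : ℝ → ℝ) (hF : Differentiable ℝ F) (c b : ℝ) :
    deriv (fun y => c * F (b * y)) = fun y => (c * b) * deriv F (b * y) := by
  funext y
  have h1 : HasDerivAt (fun y : ℝ => F (b * y)) (deriv F (b * y) * (b * 1)) y :=
    (hF (b * y)).hasDerivAt.comp y ((hasDerivAt_id y).const_mul b)
  rw [(h1.const_mul c).deriv]; ring

private lemma scale_deriv3 (F : ℝ → ℝ) (hF : ContDiff ℝ (⊤ : ℕ∞) F) (c b x : ℝ) :
    deriv (deriv (deriv (fun y => c * F (b * y)))) x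
      = (c * b ^ 3) * deriv (deriv (deriv F)) (b * x) := by
  have h1 := contDiff_infty_iff_deriv.mp hF
  have h2 := contDiff_infty_iff_deriv.mp h1.2
  have h3 := contDiff_infty_iff_deriv.mp h2.2
  rw [scale_deriv F h1.1 c b, scale_deriv (deriv F) h2.1 (c * b) b,
    scale_deriv (deriv (deriv F)) h3.1 (c * b * b) b]
  ring

/-- Table 1, Case 5: the scaling symmetry generated by
`(3m-n-2)t∂_t + (m-n)x∂_x - 2u∂_u` of the constant-coefficient K(m,n) equation. -/
theorem scaling_symmetry_constant_coefficient
    (m n : ℝ) (hn : n ≠ 0) (ε : ℝ) (hε : ε = 1 ∨ ε = -1) (s : ℝ)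
    (u : ℝ → ℝ → ℝ) (hu : ContDiff ℝ (⊤ : ℕ∞) (Function.uncurry u))
    (hupos : ∀ t x : ℝ, 0 < u t x)
    (hupde : ∀ t x : ℝ,
      pdT u t x + ε * pdX (fun t x => u t x ^ m) t x
        + pdX3 (fun t x => u t x ^ n) t x = 0)
    (v : ℝ → ℝ → ℝ)
    (hv : ∀ t x : ℝ, v t x = Real.exp (-2 * s)
      * u (Real.exp (-(3 * m - n - 2) * s) * t) (Real.exp (-(m - n) * s) * x)) :
    ContDiff ℝ (⊤ : ℕ∞) (Function.uncurry v) ∧ (∀ t x : ℝ, 0 < v t x) ∧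
      ∀ t x : ℝ,
        pdT v t x + ε * pdX (fun t x => v t x ^ m) t x
          + pdX3 (fun t x => v t x ^ n) t x = 0 := by
  set c : ℝ := Real.exp (-2 * s) with hc
  set a : ℝ := Real.exp (-(3 * m - n - 2) * s) with ha
  set b : ℝ := Real.exp (-(m - n) * s) with hb
  have hcpos : 0 < c := Real.exp_pos _
  -- partial smoothness of u
  have hux : ∀ t, ContDiff ℝ (⊤ : ℕ∞) (fun y => u t y) := fun t =>
    hu.comp ((contDiff_const (c := t)).prodMk contDiff_id)
  have hut : ∀ x, ContDiff ℝ (⊤ : ℕ∞) (fun τ => u τ x) := fun x =>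
    hu.comp (contDiff_id.prodMk (contDiff_const (c := x)))
  refine ⟨?_, ?_, ?_⟩
  · have : Function.uncurry v = fun p : ℝ × ℝ =>
        c * Function.uncurry u (a * p.1, b * p.2) := by
      funext p
      exact hv p.1 p.2
    rw [this]
    exact contDiff_const.mul (hu.comp
      ((contDiff_const.mul contDiff_fst).prodMk (contDiff_const.mul contDiff_snd)))
  · intro t x
    rw [hv]
    exact mul_pos hcpos (hupos _ _)
  · intro t x
    set A : ℝ := a * t
    set B : ℝ := b * x
    -- pdT
    have hT : pdT v t x = (c * a) * pdT u A B := by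
      have h1 : (fun τ => v τ x) = fun τ => c * ((fun σ => u σ (b * x)) (a * τ)) := by
        funext τ; exact hv τ x
      unfold pdT
      rw [h1, scale_deriv _ ((hut (b * x)).differentiable (by simp)) c a]
    -- pdX of v^m
    have hX : pdX (fun t x => v t x ^ m) t x
        = (c ^ m * b) * pdX (fun t x => u t x ^ m) A B := by
      have h1 : (fun y => v t y ^ m)
          = fun y => c ^ m * ((fun z => u A z ^ m) (b * y)) := by
        funext y
        rw [hv, Real.mul_rpow hcpos.le (hupos _ _).le]
      have hdF : Differentiable ℝ (fun z => u A z ^ m) := fun z =>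
        (((hux A).differentiable (by simp)) z).rpow_const (Or.inl (hupos A z).ne')
      unfold pdX
      rw [h1, scale_deriv _ hdF (c ^ m) b]
    -- pdX3 of v^n
    have hX3 : pdX3 (fun t x => v t x ^ n) t x
        = (c ^ n * b ^ 3) * pdX3 (fun t x => u t x ^ n) A B := by
      have h1 : (fun y => v t y ^ n)
          = fun y => c ^ n * ((fun z => u A z ^ n) (b * y)) := by
        funext y
        rw [hv, Real.mul_rpow hcpos.le (hupos _ _).le]
      have hH : ContDiff ℝ (⊤ : ℕ∞) (fun z => u A z ^ n) :=
        contDiff_iff_contDiffAt.mpr fun z =>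
          ((hux A).contDiffAt).rpow_const_of_ne (hupos A z).ne'
      unfold pdX3
      rw [h1, scale_deriv3 _ hH (c ^ n) b x]
    rw [hT, hX, hX3]
    have e1 : c * a = Real.exp ((n - 3 * m) * s) := by
      rw [hc, ha, ← Real.exp_add]; congr 1; ring
    have e2 : c ^ m * b = Real.exp ((n - 3 * m) * s) := by
      rw [hc, hb, ← Real.exp_mul, ← Real.exp_add]; congr 1; ring
    have e3 : c ^ n * b ^ 3 = Real.exp ((n - 3 * m) * s) := by
      rw [hc, hb, ← Real.exp_mul, ← Real.exp_nat_mul, ← Real.exp_add]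
      congr 1; push_cast; ring
    rw [e1, e2, e3]
    linear_combination Real.exp ((n - 3 * m) * s) * hupde A B
end

section
/- (Table 1, Case 7: scaling symmetry when f(t) = t^k.) Let m, n, k ∈ ℝ with n ≠ 0 and k ≠ 0, let ε = ±1, and let s ∈ ℝ. Suppose u : ℝ → ℝ → ℝ is smooth, positive on (0,∞) × ℝ, and satisfies ∂_t u + ε ∂_x(u^m) + t^k ∂_x^3(u^n) = 0 for all t > 0, x ∈ ℝ. Then the function v defined by v(t, x) = e^{(k-2)s} · u(e^{-(3m-n-2)s} t, e^{-(km-k+m-n)s} x) is smooth, positive, and satisfies the same equation ∂_t v + ε ∂_x(v^m) + t^k ∂_x^3(v^n) = 0 for all t > 0, x ∈ ℝ. (This is the one-parameter group generated by (3m-n-2) t ∂_t + (km-k+m-n) x ∂_x + (k-2) u ∂_u.) -/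
open Real

/-- Chain rule for scaling plus constant multiple, at a point. -/
lemma deriv_scale1 (f : ℝ → ℝ) (A c x : ℝ) (hf : DifferentiableAt ℝ f (c * x)) :
    deriv (fun y => A * f (c * y)) x = (A * c) * deriv f (c * x) := by
  have h1 : (fun y => A * f (c * y)) = (fun z => A * f z) ∘ (fun y => c * y) := rfl
  rw [h1, deriv_comp x (by exact (hf.const_mul A)) (by fun_prop)]
  have h2 : deriv (fun y : ℝ => c * y) x = c := by
    simpa using ((hasDerivAt_id x).const_mul c).deriv
  rw [h2, deriv_const_mul_field]
  ring

/-- Functional version, assuming global differentiability. -/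
lemma deriv_scale1' (f : ℝ → ℝ) (A c : ℝ) (hf : Differentiable ℝ f) :
    deriv (fun y => A * f (c * y)) = fun y => (A * c) * deriv f (c * y) :=
  funext fun y => deriv_scale1 f A c y (hf _)

/-- Triple chain rule for scaling. -/
lemma deriv3_scale (g : ℝ → ℝ) (A c x : ℝ) (hg : ContDiff ℝ (⊤ : ℕ∞) g) :
    deriv (deriv (deriv (fun y => A * g (c * y)))) x
      = (A * c ^ 3) * deriv (deriv (deriv g)) (c * x) := by
  have hg' : ContDiff ℝ (⊤ : ℕ∞) (deriv g) := (contDiff_infty_iff_deriv.mp hg).2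
  have hg'' : ContDiff ℝ (⊤ : ℕ∞) (deriv (deriv g)) := (contDiff_infty_iff_deriv.mp hg').2
  rw [deriv_scale1' g A c (hg.differentiable (by simp)),
      deriv_scale1' (deriv g) (A * c) c (hg'.differentiable (by simp)),
      deriv_scale1 (deriv (deriv g)) (A * c * c) c x (hg''.differentiable (by simp) _)]
  ring

/-- Table 1, Case 7: the scaling symmetry generated by
`(3m-n-2)t∂_t + (km-k+m-n)x∂_x + (k-2)u∂_u` when `f(t) = t^k`. -/
theorem scaling_symmetry_f_power
    (m n k : ℝ) (hn : n ≠ 0) (hk : k ≠ 0) (ε : ℝ) (hε : ε = 1 ∨ ε = -1) (s : ℝ)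
    (u : ℝ → ℝ → ℝ) (hu : ContDiff ℝ (⊤ : ℕ∞) (Function.uncurry u))
    (hupos : ∀ t x : ℝ, 0 < t → 0 < u t x)
    (hupde : ∀ t x : ℝ, 0 < t →
      pdT u t x + ε * pdX (fun t x => u t x ^ m) t x
        + t ^ k * pdX3 (fun t x => u t x ^ n) t x = 0)
    (v : ℝ → ℝ → ℝ)
    (hv : ∀ t x : ℝ, v t x = Real.exp ((k - 2) * s)
      * u (Real.exp (-(3 * m - n - 2) * s) * t) (Real.exp (-(k * m - k + m - n) * s) * x)) :
    ContDiff ℝ (⊤ : ℕ∞) (Function.uncurry v) ∧ (∀ t x : ℝ, 0 < t → 0 < v t x) ∧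
      ∀ t x : ℝ, 0 < t →
        pdT v t x + ε * pdX (fun t x => v t x ^ m) t x
          + t ^ k * pdX3 (fun t x => v t x ^ n) t x = 0 := by
  set A := Real.exp ((k - 2) * s) with hA
  set B := Real.exp (-(3 * m - n - 2) * s) with hB
  set C := Real.exp (-(k * m - k + m - n) * s) with hC
  have hA0 : 0 < A := Real.exp_pos _
  have hB0 : 0 < B := Real.exp_pos _
  have hC0 : 0 < C := Real.exp_pos _
  -- smoothness
  have hveq : Function.uncurry v = fun p : ℝ × ℝ => A * u (B * p.1) (C * p.2) :=
    funext fun p => hv p.1 p.2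
  have hvsm : ContDiff ℝ (⊤ : ℕ∞) (Function.uncurry v) := by
    rw [hveq]
    have : ContDiff ℝ (⊤ : ℕ∞) (fun p : ℝ × ℝ => Function.uncurry u (B * p.1, C * p.2)) :=
      hu.comp (by fun_prop)
    exact contDiff_const.mul this
  refine ⟨hvsm, fun t x ht => by
    rw [hv]; exact mul_pos hA0 (hupos _ _ (mul_pos hB0 ht)), ?_⟩
  -- the PDE
  intro t x ht
  have hBt : 0 < B * t := mul_pos hB0 ht
  -- differentiability facts about u
  have hut : ∀ y : ℝ, Differentiable ℝ (fun τ => u τ y) := by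
    intro y
    have h : (fun τ => u τ y) = Function.uncurry u ∘ (fun τ : ℝ => (τ, y)) := rfl
    rw [h]
    exact (hu.differentiable (by simp)).comp (by fun_prop)
  have hux : ∀ τ : ℝ, ContDiff ℝ (⊤ : ℕ∞) (fun y => u τ y) :=
    fun τ => (hu.comp (ContDiff.prodMk (contDiff_const : ContDiff ℝ (⊤:ℕ∞) fun _ : ℝ => τ) contDiff_id) :
      ContDiff ℝ (⊤ : ℕ∞) (Function.uncurry u ∘ fun y : ℝ => (τ, y)))
  -- term 1
  have h1 : pdT v t x = (A * B) * pdT u (B * t) (C * x) := by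
    have : (fun τ => v τ x) = fun τ => A * (fun τ' => u τ' (C * x)) (B * τ) :=
      funext fun τ => hv τ x
    rw [pdT, this, deriv_scale1 _ A B t (hut (C * x) _)]; rfl
  -- term 2
  have h2 : pdX (fun t x => v t x ^ m) t x
      = (A ^ m * C) * pdX (fun t x => u t x ^ m) (B * t) (C * x) := by
    have hfe : (fun y => v t y ^ m) = fun y => A ^ m * (fun z => u (B * t) z ^ m) (C * y) := by
      funext y
      rw [hv, Real.mul_rpow hA0.le (hupos _ _ hBt).le]
    have hdg : DifferentiableAt ℝ (fun z => u (B * t) z ^ m) (C * x) := by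
      exact ((hux (B * t)).differentiable (by simp) (C * x)).rpow_const
        (Or.inl (ne_of_gt (hupos _ _ hBt)))
    rw [pdX, hfe, deriv_scale1 _ (A ^ m) C x hdg]; rfl
  -- term 3
  have h3 : pdX3 (fun t x => v t x ^ n) t x
      = (A ^ n * C ^ 3) * pdX3 (fun t x => u t x ^ n) (B * t) (C * x) := by
    have hfe : (fun y => v t y ^ n) = fun y => A ^ n * (fun z => u (B * t) z ^ n) (C * y) := by
      funext y
      rw [hv, Real.mul_rpow hA0.le (hupos _ _ hBt).le]
    have hgsm : ContDiff ℝ (⊤ : ℕ∞) (fun z => u (B * t) z ^ n) := by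
      rw [contDiff_iff_contDiffAt]
      intro z
      exact ((hux (B * t)).contDiffAt).rpow contDiffAt_const
        (ne_of_gt (hupos _ _ hBt))
    rw [pdX3, hfe, deriv3_scale _ (A ^ n) C x hgsm]; rfl
  rw [h1, h2, h3]
  have hpde := hupde (B * t) (C * x) hBt
  -- key coefficient identities
  have e1 : A ^ m * C = A * B := by
    rw [hA, hB, hC, ← Real.exp_mul, ← Real.exp_add, ← Real.exp_add, Real.exp_eq_exp]
    ring
  have e2 : t ^ k * (A ^ n * C ^ 3) = (A * B) * (B * t) ^ k := by
    rw [Real.mul_rpow hB0.le ht.le]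
    have : A ^ n * C ^ 3 = (A * B) * B ^ k := by
      have hC3 : C ^ (3:ℕ) = Real.exp ((-(k * m - k + m - n) * s) * 3) := by
        rw [hC, ← Real.exp_nat_mul]; ring_nf
      rw [hA, hB, hC3, ← Real.exp_mul, ← Real.exp_mul, ← Real.exp_add, ← Real.exp_add,
        ← Real.exp_add, Real.exp_eq_exp]
      ring
    rw [this]; ring
  calc (A * B) * pdT u (B * t) (C * x)
        + ε * ((A ^ m * C) * pdX (fun t x => u t x ^ m) (B * t) (C * x))
        + t ^ k * ((A ^ n * C ^ 3) * pdX3 (fun t x => u t x ^ n) (B * t) (C * x))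
      = (A * B) * (pdT u (B * t) (C * x)
          + ε * pdX (fun t x => u t x ^ m) (B * t) (C * x)
          + (B * t) ^ k * pdX3 (fun t x => u t x ^ n) (B * t) (C * x)) := by
        rw [show ε * ((A ^ m * C) * pdX (fun t x => u t x ^ m) (B * t) (C * x))
            = ε * ((A * B) * pdX (fun t x => u t x ^ m) (B * t) (C * x)) by rw [e1],
          show t ^ k * ((A ^ n * C ^ 3) * pdX3 (fun t x => u t x ^ n) (B * t) (C * x))
            = (t ^ k * (A ^ n * C ^ 3)) * pdX3 (fun t x => u t x ^ n) (B * t) (C * x) by ring,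
          e2]
        ring
    _ = 0 := by rw [hpde, mul_zero]
end

section
/- (Table 1, Case 9: symmetry when f(t) = e^t.) Let m, n ∈ ℝ with n ≠ 0, let ε = ±1, and let s ∈ ℝ. Suppose u : ℝ → ℝ → ℝ is smooth, positive, and satisfies ∂_t u + ε ∂_x(u^m) + e^t ∂_x^3(u^n) = 0 on ℝ × ℝ. Then the function v defined by v(t, x) = e^{s} · u(t - (3m-n-2)s, e^{-(m-1)s} x) is smooth, positive, and satisfies the same equation ∂_t v + ε ∂_x(v^m) + e^t ∂_x^3(v^n) = 0 on ℝ × ℝ. (This is the one-parameter group generated by (3m-n-2) ∂_t + (m-1) x ∂_x + u ∂_u.) -/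
open Real

lemma deriv_scale (g : ℝ → ℝ) (hg : Differentiable ℝ g) (A c : ℝ) :
    deriv (fun y => A * g (c * y)) = fun y => A * c * deriv g (c * y) := by
  funext x
  have hcy : HasDerivAt (fun y : ℝ => c * y) c x := by
    simpa using (hasDerivAt_id x).const_mul c
  have h1 : HasDerivAt (fun y : ℝ => g (c * y)) (deriv g (c * x) * c) x :=
    (hg (c * x)).hasDerivAt.comp x hcy
  have h2 := h1.const_mul A
  rw [h2.deriv]; ring

/-- Table 1, Case 9: the symmetry generated by
`(3m-n-2)∂_t + (m-1)x∂_x + u∂_u` when `f(t) = e^t`. -/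
theorem symmetry_f_exponential
    (m n : ℝ) (hn : n ≠ 0) (ε : ℝ) (hε : ε = 1 ∨ ε = -1) (s : ℝ)
    (u : ℝ → ℝ → ℝ) (hu : ContDiff ℝ (⊤ : ℕ∞) (Function.uncurry u))
    (hupos : ∀ t x : ℝ, 0 < u t x)
    (hupde : ∀ t x : ℝ,
      pdT u t x + ε * pdX (fun t x => u t x ^ m) t x
        + Real.exp t * pdX3 (fun t x => u t x ^ n) t x = 0)
    (v : ℝ → ℝ → ℝ)
    (hv : ∀ t x : ℝ, v t x = Real.exp s
      * u (t - (3 * m - n - 2) * s) (Real.exp (-(m - 1) * s) * x)) :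
    ContDiff ℝ (⊤ : ℕ∞) (Function.uncurry v) ∧ (∀ t x : ℝ, 0 < v t x) ∧
      ∀ t x : ℝ,
        pdT v t x + ε * pdX (fun t x => v t x ^ m) t x
          + Real.exp t * pdX3 (fun t x => v t x ^ n) t x = 0 := by
  have top_le : (1 : WithTop ℕ∞) ≤ ((⊤ : ℕ∞) : WithTop ℕ∞) := by exact_mod_cast le_top
  set a : ℝ := (3 * m - n - 2) * s with ha
  set c : ℝ := Real.exp (-(m - 1) * s) with hc
  -- smoothness of slices of u
  have hslice : ∀ t : ℝ, ContDiff ℝ (⊤ : ℕ∞) (fun y => u t y) := by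
    intro t
    exact hu.comp (contDiff_const.prodMk contDiff_id)
  have htslice : ∀ x : ℝ, ContDiff ℝ (⊤ : ℕ∞) (fun τ => u τ x) := by
    intro x
    exact hu.comp (contDiff_id.prodMk contDiff_const)
  -- smoothness of powers of slices
  have hpow : ∀ (t p : ℝ), ContDiff ℝ (⊤ : ℕ∞) (fun y => u t y ^ p) := by
    intro t p
    rw [contDiff_iff_contDiffAt]
    intro y
    exact (Real.contDiffAt_rpow_const_of_ne (ne_of_gt (hupos t y))).comp y
      (hslice t).contDiffAt
  -- smoothness of v
  have hvsm : ContDiff ℝ (⊤ : ℕ∞) (Function.uncurry v) := by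
    have hfun : Function.uncurry v = fun p : ℝ × ℝ =>
        Real.exp s * Function.uncurry u (p.1 - a, c * p.2) :=
      funext fun p => hv p.1 p.2
    rw [hfun]
    exact contDiff_const.mul (hu.comp ((contDiff_fst.sub contDiff_const).prodMk
      (contDiff_const.mul contDiff_snd)))
  refine ⟨hvsm, fun t x => by rw [hv]; exact mul_pos (Real.exp_pos s) (hupos _ _), fun t x => ?_⟩
  -- time derivative
  have hT : pdT v t x = Real.exp s * pdT u (t - a) (c * x) := by
    have hfun : (fun τ => v τ x) = fun τ => Real.exp s * u (τ - a) (c * x) :=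
      funext fun τ => hv τ x
    show deriv (fun τ => v τ x) t = _
    rw [hfun, deriv_const_mul_field]
    exact congrArg _ (deriv_comp_sub_const (f := fun σ => u σ (c * x)) (a := a) (x := t))
  -- first x-derivative of v^m
  have hXm : pdX (fun t x => v t x ^ m) t x
      = Real.exp (s * m) * c * pdX (fun t x => u t x ^ m) (t - a) (c * x) := by
    have hfun : (fun y => v t y ^ m) = fun y => Real.exp (s * m) * (fun z => u (t - a) z ^ m) (c * y) := by
      funext y
      rw [hv, Real.mul_rpow (Real.exp_pos s).le (hupos _ _).le, ← Real.exp_mul]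
    show deriv (fun y => v t y ^ m) x = _
    rw [hfun, deriv_scale _ ((hpow (t - a) m).differentiable (by simp)) (Real.exp (s * m)) c]
    rfl
  -- third x-derivative of v^n
  have hX3 : pdX3 (fun t x => v t x ^ n) t x
      = Real.exp (s * n) * c * c * c * pdX3 (fun t x => u t x ^ n) (t - a) (c * x) := by
    set g : ℝ → ℝ := fun z => u (t - a) z ^ n with hg
    have hgsm : ContDiff ℝ (⊤ : ℕ∞) g := hpow (t - a) n
    have hg1 : Differentiable ℝ g := hgsm.differentiable (by simp)
    have hgsm' : ContDiff ℝ (⊤ : ℕ∞) (deriv g) := by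
      exact_mod_cast (contDiff_infty_iff_deriv.mp (by exact_mod_cast hgsm)).2
    have hg2 : Differentiable ℝ (deriv g) := hgsm'.differentiable (by simp)
    have hgsm'' : ContDiff ℝ (⊤ : ℕ∞) (deriv (deriv g)) := by
      exact_mod_cast (contDiff_infty_iff_deriv.mp (by exact_mod_cast hgsm')).2
    have hg3 : Differentiable ℝ (deriv (deriv g)) := hgsm''.differentiable (by simp)
    have hfun : (fun y => v t y ^ n) = fun y => Real.exp (s * n) * g (c * y) := by
      funext y
      rw [hv, Real.mul_rpow (Real.exp_pos s).le (hupos _ _).le, ← Real.exp_mul]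
    show deriv (deriv (deriv (fun y => v t y ^ n))) x = _
    rw [hfun, deriv_scale _ hg1 (Real.exp (s * n)) c,
      deriv_scale _ hg2 (Real.exp (s * n) * c) c,
      deriv_scale _ hg3 (Real.exp (s * n) * c * c) c]
    rfl
  rw [hT, hXm, hX3]
  have h1 : Real.exp (s * m) * c = Real.exp s := by
    rw [hc, ← Real.exp_add]; congr 1; ring
  have h2 : Real.exp t * (Real.exp (s * n) * c * c * c) = Real.exp s * Real.exp (t - a) := by
    rw [hc, ha]; simp only [← Real.exp_add]; congr 1; ring
  linear_combination Real.exp s * hupde (t - a) (c * x)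
    + (ε * pdX (fun t x => u t x ^ m) (t - a) (c * x)) * h1
    + (pdX3 (fun t x => u t x ^ n) (t - a) (c * x)) * h2
end

section
/- (Table 1, Case 4: conformal symmetry of u_t + (u^{-1/2})_xxx = 0.) Let s ∈ ℝ and let Ω = {(t, x) ∈ ℝ × ℝ : 1 + s·x > 0}. Suppose u : ℝ → ℝ → ℝ is smooth, positive, and satisfies ∂_t u + ∂_x^3(u^{-1/2}) = 0 on ℝ × ℝ. Then the function v defined on Ω by v(t, x) = (1 + s·x)^{-4} · u(t, x/(1 + s·x)) is smooth, positive on Ω, and satisfies ∂_t v + ∂_x^3(v^{-1/2}) = 0 on Ω. (This is the finite form of the additional symmetry generator x² ∂_x - 4xu ∂_u admitted in the case n = -1/2, m = 0, f = 1.) -/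
open Real Filter Topology

lemma lin_hasDeriv (s x : ℝ) : HasDerivAt (fun y : ℝ => 1 + s*y) s x := by
  simpa using ((hasDerivAt_id x).const_mul s).const_add 1

lemma hw_hasDeriv (s x : ℝ) (h : 1 + s*x ≠ 0) :
    HasDerivAt (fun y => y / (1 + s*y)) (((1+s*x)^2)⁻¹) x := by
  have h2 := (hasDerivAt_id x).div (lin_hasDeriv s x) h
  refine h2.congr_deriv ?_
  symm
  simp only [id]
  field_simp
  ring

lemma comp_hasDeriv (s x : ℝ) (h : 1+s*x ≠ 0) (φ : ℝ → ℝ) (hφ : Differentiable ℝ φ) :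
    HasDerivAt (fun y => φ (y/(1+s*y))) (deriv φ (x/(1+s*x)) * ((1+s*x)^2)⁻¹) x :=
  ((hφ _).hasDerivAt).comp x (hw_hasDeriv s x h)

lemma sq_hasDeriv (s x : ℝ) : HasDerivAt (fun y : ℝ => (1+s*y)^2) (2*s*(1+s*x)) x := by
  have := (lin_hasDeriv s x).pow 2
  refine this.congr_deriv ?_
  symm
  ring

lemma step1' (s x : ℝ) (hx : 0 < 1 + s*x) (Φ : ℝ → ℝ) (hΦd : Differentiable ℝ Φ) :
    HasDerivAt (fun y => (1+s*y)^2 * Φ (y/(1+s*y)))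
      (2*s*(1+s*x) * Φ (x/(1+s*x)) + deriv Φ (x/(1+s*x))) x := by
  have hx' : 1 + s*x ≠ 0 := ne_of_gt hx
  have hcomb := (sq_hasDeriv s x).mul (comp_hasDeriv s x hx' Φ hΦd)
  refine hcomb.congr_deriv ?_
  symm
  generalize Φ (x/(1+s*x)) = A
  generalize deriv Φ (x/(1+s*x)) = B
  field_simp

lemma step2' (s x : ℝ) (hx : 0 < 1 + s*x) (Φ : ℝ → ℝ) (hΦd : Differentiable ℝ Φ)
    (hΦ1 : Differentiable ℝ (deriv Φ)) :
    HasDerivAt (fun y => 2*s*(1+s*y) * Φ (y/(1+s*y)) + deriv Φ (y/(1+s*y)))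
      (2*s^2 * Φ (x/(1+s*x)) + 2*s*(1+s*x)⁻¹ * deriv Φ (x/(1+s*x))
        + ((1+s*x)^2)⁻¹ * deriv (deriv Φ) (x/(1+s*x))) x := by
  have hx' : 1 + s*x ≠ 0 := ne_of_gt hx
  have hL : HasDerivAt (fun y : ℝ => 2*s*(1+s*y)) (2*s*s) x :=
    (lin_hasDeriv s x).const_mul (2*s)
  have hcomb := (hL.mul (comp_hasDeriv s x hx' Φ hΦd)).add
    (comp_hasDeriv s x hx' (deriv Φ) hΦ1)
  refine hcomb.congr_deriv ?_
  symm
  generalize Φ (x/(1+s*x)) = A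
  generalize deriv Φ (x/(1+s*x)) = B
  generalize deriv (deriv Φ) (x/(1+s*x)) = C
  field_simp

lemma step3' (s x : ℝ) (hx : 0 < 1 + s*x) (Φ : ℝ → ℝ) (hΦd : Differentiable ℝ Φ)
    (hΦ1 : Differentiable ℝ (deriv Φ)) (hΦ2 : Differentiable ℝ (deriv (deriv Φ))) :
    HasDerivAt (fun y => 2*s^2 * Φ (y/(1+s*y)) + 2*s*(1+s*y)⁻¹ * deriv Φ (y/(1+s*y))
        + ((1+s*y)^2)⁻¹ * deriv (deriv Φ) (y/(1+s*y)))
      (((1+s*x)^4)⁻¹ * deriv (deriv (deriv Φ)) (x/(1+s*x))) x := by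
  have hx' : 1 + s*x ≠ 0 := ne_of_gt hx
  have h1 := (comp_hasDeriv s x hx' Φ hΦd).const_mul (2*s^2)
  have hInv : HasDerivAt (fun y : ℝ => 2*s*(1+s*y)⁻¹) (2*s*(-s/(1+s*x)^2)) x :=
    ((lin_hasDeriv s x).inv hx').const_mul (2*s)
  have h2 := hInv.mul (comp_hasDeriv s x hx' (deriv Φ) hΦ1)
  have hInv2 : HasDerivAt (fun y : ℝ => ((1+s*y)^2)⁻¹)
      (-(2*s*(1+s*x))/((1+s*x)^2)^2) x := (sq_hasDeriv s x).inv (pow_ne_zero 2 hx')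
  have h3 := hInv2.mul (comp_hasDeriv s x hx' (deriv (deriv Φ)) hΦ2)
  have hcomb := (h1.add h2).add h3
  refine hcomb.congr_deriv ?_
  symm
  generalize Φ (x/(1+s*x)) = A
  generalize deriv Φ (x/(1+s*x)) = B
  generalize deriv (deriv Φ) (x/(1+s*x)) = C
  generalize deriv (deriv (deriv Φ)) (x/(1+s*x)) = D
  field_simp
  ring

lemma third_deriv_conf (s : ℝ) (Φ : ℝ → ℝ) (hΦ : ContDiff ℝ (⊤:ℕ∞) Φ) (x₀ : ℝ)
    (h : 0 < 1 + s*x₀) :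
    deriv (deriv (deriv (fun x => (1+s*x)^2 * Φ (x/(1+s*x))))) x₀
      = ((1+s*x₀)^4)⁻¹ * deriv (deriv (deriv Φ)) (x₀/(1+s*x₀)) := by
  have hΦd : Differentiable ℝ Φ := hΦ.differentiable (by simp)
  have hΦ1 : Differentiable ℝ (deriv Φ) := by
    have := (hΦ.iterate_deriv 1).differentiable (by simp)
    simpa using this
  have hΦ2 : Differentiable ℝ (deriv (deriv Φ)) := by
    have := (hΦ.iterate_deriv 2).differentiable (by simp)
    simpa [Function.iterate_succ', Function.comp] using this
  have hev : ∀ᶠ x in 𝓝 x₀, 0 < 1 + s*x := by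
    have hc : Continuous fun x : ℝ => 1 + s*x := by continuity
    exact (hc.tendsto x₀).eventually (eventually_gt_nhds h)
  have e1 : deriv (fun x => (1+s*x)^2 * Φ (x/(1+s*x)))
      =ᶠ[𝓝 x₀] fun x => 2*s*(1+s*x) * Φ (x/(1+s*x)) + deriv Φ (x/(1+s*x)) := by
    filter_upwards [hev] with x hx using (step1' s x hx Φ hΦd).deriv
  have e2 : deriv (deriv (fun x => (1+s*x)^2 * Φ (x/(1+s*x))))
      =ᶠ[𝓝 x₀] fun x => 2*s^2 * Φ (x/(1+s*x)) + 2*s*(1+s*x)⁻¹ * deriv Φ (x/(1+s*x))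
        + ((1+s*x)^2)⁻¹ * deriv (deriv Φ) (x/(1+s*x)) := by
    refine e1.deriv.trans ?_
    filter_upwards [hev] with x hx using (step2' s x hx Φ hΦd hΦ1).deriv
  calc deriv (deriv (deriv (fun x => (1+s*x)^2 * Φ (x/(1+s*x))))) x₀
      = deriv (fun x => 2*s^2 * Φ (x/(1+s*x)) + 2*s*(1+s*x)⁻¹ * deriv Φ (x/(1+s*x))
        + ((1+s*x)^2)⁻¹ * deriv (deriv Φ) (x/(1+s*x))) x₀ := e2.deriv.eq_of_nhds
    _ = _ := (step3' s x₀ h Φ hΦd hΦ1 hΦ2).deriv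

lemma rpow_conf (a U : ℝ) (ha : 0 < a) (hU : 0 < U) :
    ((a ^ (4:ℕ))⁻¹ * U) ^ (-(1:ℝ)/2) = a^2 * U ^ (-(1:ℝ)/2) := by
  have h1 : ((a ^ (4:ℕ))⁻¹ : ℝ) = a ^ (-(4:ℝ)) := by
    rw [← Real.rpow_natCast a 4, ← Real.rpow_neg ha.le]; norm_num
  have h2 : (a:ℝ)^(2:ℕ) = a ^ ((2:ℝ)) := by
    rw [← Real.rpow_natCast a 2]; norm_num
  rw [Real.mul_rpow (by positivity) hU.le, h1, ← Real.rpow_mul ha.le, h2]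
  norm_num

/-- Table 1, Case 4: the conformal symmetry (finite form of `x²∂_x - 4xu∂_u`)
of the equation `u_t + (u^{-1/2})_xxx = 0`. -/
theorem conformal_symmetry_n_neg_half
    (s : ℝ)
    (Ω : Set (ℝ × ℝ)) (hΩ : Ω = {p : ℝ × ℝ | 0 < 1 + s * p.2})
    (u : ℝ → ℝ → ℝ) (hu : ContDiff ℝ (⊤ : ℕ∞) (Function.uncurry u))
    (hupos : ∀ t x : ℝ, 0 < u t x)
    (hupde : ∀ t x : ℝ,
      pdT u t x + pdX3 (fun t x => u t x ^ (-(1 : ℝ) / 2)) t x = 0)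
    (v : ℝ → ℝ → ℝ)
    (hv : ∀ t x : ℝ, v t x = ((1 + s * x) ^ (4 : ℕ))⁻¹ * u t (x / (1 + s * x))) :
    ContDiffOn ℝ (⊤ : ℕ∞) (Function.uncurry v) Ω ∧ (∀ p ∈ Ω, 0 < v p.1 p.2) ∧
      ∀ p ∈ Ω,
        pdT v p.1 p.2 + pdX3 (fun t x => v t x ^ (-(1 : ℝ) / 2)) p.1 p.2 = 0 := by
  subst hΩ
  have huv : Function.uncurry v
      = fun p : ℝ×ℝ => ((1 + s*p.2)^(4:ℕ))⁻¹ * u p.1 (p.2/(1+s*p.2)) := by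
    funext p; exact hv p.1 p.2
  refine ⟨?_, ?_, ?_⟩
  · -- smoothness
    have hne : ∀ p : ℝ×ℝ, p ∈ {p : ℝ×ℝ | 0 < 1 + s*p.2} → (1 + s*p.2) ≠ 0 :=
      fun p hp => ne_of_gt hp
    have hbase : ContDiff ℝ (⊤:ℕ∞) (fun p : ℝ×ℝ => 1 + s*p.2) :=
      contDiff_const.add (contDiff_const.mul contDiff_snd)
    have h1 : ContDiffOn ℝ (⊤:ℕ∞) (fun p : ℝ×ℝ => ((1+s*p.2)^(4:ℕ))⁻¹)
        {p : ℝ×ℝ | 0 < 1 + s*p.2} :=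
      ((hbase.pow 4).contDiffOn).inv (fun p hp => pow_ne_zero 4 (hne p hp))
    have h2 : ContDiffOn ℝ (⊤:ℕ∞) (fun p : ℝ×ℝ => u p.1 (p.2/(1+s*p.2)))
        {p : ℝ×ℝ | 0 < 1 + s*p.2} := by
      have hin : ContDiffOn ℝ (⊤:ℕ∞) (fun p : ℝ×ℝ => ((p.1 : ℝ), p.2/(1+s*p.2)))
          {p : ℝ×ℝ | 0 < 1 + s*p.2} :=
        (contDiff_fst.contDiffOn).prodMk ((contDiff_snd.contDiffOn).div hbase.contDiffOn hne)
      exact hu.comp_contDiffOn hin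
    rw [huv]; exact h1.mul h2
  · intro p hp
    have hpos : (0:ℝ) < 1 + s*p.2 := hp
    rw [hv]
    exact mul_pos (inv_pos.2 (by positivity)) (hupos _ _)
  · rintro ⟨t, x₀⟩ hp
    have h : 0 < 1 + s * x₀ := hp
    set w₀ := x₀ / (1 + s*x₀) with hw₀
    set Φ : ℝ → ℝ := fun y => u t y ^ (-(1:ℝ)/2) with hΦdef
    have hut : ContDiff ℝ (⊤:ℕ∞) (fun y => u t y) :=
      hu.comp (contDiff_const.prodMk contDiff_id)
    have hΦ : ContDiff ℝ (⊤:ℕ∞) Φ := by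
      rw [contDiff_iff_contDiffAt]
      intro y
      exact (hut.contDiffAt).rpow contDiffAt_const (ne_of_gt (hupos t y))
    have hdt : DifferentiableAt ℝ (fun τ => u τ w₀) t :=
      ((hu.comp ((contDiff_id).prodMk contDiff_const)).differentiable
        (by simp)).differentiableAt
    have hT : pdT v t x₀ = ((1+s*x₀)^(4:ℕ))⁻¹ * pdT u t w₀ := by
      have hfun : (fun τ => v τ x₀) = fun τ => ((1+s*x₀)^(4:ℕ))⁻¹ * u τ w₀ := by
        funext τ; exact hv τ x₀
      rw [pdT, hfun, deriv_const_mul _ hdt]; rfl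
    have hev : ∀ᶠ x in 𝓝 x₀, 0 < 1 + s*x := by
      have hc : Continuous fun x : ℝ => 1 + s*x := by continuity
      exact (hc.tendsto x₀).eventually (eventually_gt_nhds h)
    have hFG : (fun y => v t y ^ (-(1:ℝ)/2))
        =ᶠ[𝓝 x₀] (fun y => (1+s*y)^2 * Φ (y/(1+s*y))) := by
      filter_upwards [hev] with y hy
      rw [hv t y]
      exact rpow_conf _ _ hy (hupos _ _)
    have hX : pdX3 (fun t x => v t x ^ (-(1:ℝ)/2)) t x₀
        = ((1+s*x₀)^4)⁻¹ * deriv (deriv (deriv Φ)) w₀ := by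
      rw [pdX3]
      rw [hFG.deriv.deriv.deriv.eq_of_nhds]
      exact third_deriv_conf s Φ hΦ x₀ h
    have hpde := hupde t w₀
    have hE : pdX3 (fun t x => u t x ^ (-(1:ℝ)/2)) t w₀ = deriv (deriv (deriv Φ)) w₀ := rfl
    rw [hE] at hpde
    have hneg : pdT u t w₀ = - deriv (deriv (deriv Φ)) w₀ := by linarith
    rw [hT, hX, hneg]
    ring
end

section
/- (Table 1, Case 8: extra scaling symmetry when m = (n+2)/3 and f(t) = t².) Let n ∈ ℝ with n ≠ 0 and n ≠ 1, set m = (n + 2)/3, let ε = ±1, and let λ > 0. Suppose u : ℝ → ℝ → ℝ is smooth, positive on (0,∞) × ℝ, and satisfies ∂_t u + ε ∂_x(u^m) + t² ∂_x^3(u^n) = 0 for all t > 0, x ∈ ℝ. Then the function v defined by v(t, x) = u(t/λ, x/λ) is smooth, positive, and satisfies the same equation ∂_t v + ε ∂_x(v^m) + t² ∂_x^3(v^n) = 0 for all t > 0, x ∈ ℝ. (This is the one-parameter group generated by t ∂_t + x ∂_x.) -/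
open Real

private lemma deriv_comp_div_const' (g : ℝ → ℝ) (lam : ℝ) (hlam : lam ≠ 0) (x : ℝ)
    (hg : DifferentiableAt ℝ g (x / lam)) :
    deriv (fun y => g (y / lam)) x = deriv g (x / lam) / lam := by
  have h1 : DifferentiableAt ℝ (fun y : ℝ => y / lam) x :=
    differentiableAt_id.div_const lam
  have : (fun y => g (y / lam)) = g ∘ fun y : ℝ => y / lam := rfl
  rw [this, deriv_comp x hg h1]
  have : deriv (fun y : ℝ => y / lam) x = 1 / lam := by
    rw [deriv_div_const, deriv_id'']
  rw [this]
  ring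

private lemma deriv_comp_div_const_fun (g : ℝ → ℝ) (lam : ℝ) (hlam : lam ≠ 0)
    (hg : Differentiable ℝ g) :
    deriv (fun y => g (y / lam)) = fun y => deriv g (y / lam) / lam :=
  funext fun x => deriv_comp_div_const' g lam hlam x (hg _)

/-- Table 1, Case 8: the extra scaling symmetry generated by `t∂_t + x∂_x`
when `m = (n+2)/3` and `f(t) = t²`. -/
theorem extra_scaling_symmetry_f_t_squared
    (n : ℝ) (hn : n ≠ 0) (hn1 : n ≠ 1) (m : ℝ) (hm : m = (n + 2) / 3)
    (ε : ℝ) (hε : ε = 1 ∨ ε = -1) (lam : ℝ) (hlam : 0 < lam)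
    (u : ℝ → ℝ → ℝ) (hu : ContDiff ℝ (⊤ : ℕ∞) (Function.uncurry u))
    (hupos : ∀ t x : ℝ, 0 < t → 0 < u t x)
    (hupde : ∀ t x : ℝ, 0 < t →
      pdT u t x + ε * pdX (fun t x => u t x ^ m) t x
        + t ^ 2 * pdX3 (fun t x => u t x ^ n) t x = 0)
    (v : ℝ → ℝ → ℝ) (hv : ∀ t x : ℝ, v t x = u (t / lam) (x / lam)) :
    ContDiff ℝ (⊤ : ℕ∞) (Function.uncurry v) ∧ (∀ t x : ℝ, 0 < t → 0 < v t x) ∧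
      ∀ t x : ℝ, 0 < t →
        pdT v t x + ε * pdX (fun t x => v t x ^ m) t x
          + t ^ 2 * pdX3 (fun t x => v t x ^ n) t x = 0 := by
  have hlam' : lam ≠ 0 := hlam.ne'
  have h1le : (1 : WithTop ℕ∞) ≤ ((⊤ : ℕ∞) : WithTop ℕ∞) := by exact_mod_cast le_top
  have hveq : v = fun t x => u (t / lam) (x / lam) := funext fun t => funext fun x => hv t x
  subst hveq
  -- smoothness of slices
  have hsliceX : ∀ t, ContDiff ℝ (⊤ : ℕ∞) (fun y => u t y) := fun t =>
    hu.comp (contDiff_const.prodMk contDiff_id)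
  have hsliceT : ∀ x, ContDiff ℝ (⊤ : ℕ∞) (fun s => u s x) := fun x =>
    hu.comp (contDiff_id.prodMk contDiff_const)
  refine ⟨?_, ?_, ?_⟩
  · exact hu.comp ((contDiff_fst.div_const lam).prodMk (contDiff_snd.div_const lam))
  · intro t x ht
    exact hupos _ _ (div_pos ht hlam)
  · intro t x ht
    have htl : 0 < t / lam := div_pos ht hlam
    -- the three slice functions at time t/lam
    set φ : ℝ → ℝ := fun s => u s (x / lam) with hφ
    set g : ℝ → ℝ := fun y => u (t / lam) y ^ n with hg
    set ψ : ℝ → ℝ := fun y => u (t / lam) y ^ m with hψ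
    have hgsm : ContDiff ℝ (⊤ : ℕ∞) g :=
      (hsliceX (t / lam)).rpow_const_of_ne (fun y => (hupos _ y htl).ne')
    have hψsm : ContDiff ℝ (⊤ : ℕ∞) ψ :=
      (hsliceX (t / lam)).rpow_const_of_ne (fun y => (hupos _ y htl).ne')
    have hginf := hgsm
    have hgd : Differentiable ℝ g := hginf.differentiable (ne_of_gt (zero_lt_one.trans_le h1le))
    have hgd' : Differentiable ℝ (deriv g) :=
      ((contDiff_infty_iff_deriv.mp hginf).2).differentiable (ne_of_gt (zero_lt_one.trans_le h1le))
    -- pdT term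
    have h1 : pdT (fun t x => u (t / lam) (x / lam)) t x = pdT u (t / lam) (x / lam) / lam := by
      have : (fun s => u (s / lam) (x / lam)) = fun s => φ (s / lam) := rfl
      rw [pdT, this, deriv_comp_div_const' φ lam hlam' t
        (((hsliceT (x / lam)).differentiable (ne_of_gt (zero_lt_one.trans_le h1le))) _)]
      rfl
    -- pdX term
    have h2 : pdX (fun t x => u (t / lam) (x / lam) ^ m) t x
        = pdX (fun t x => u t x ^ m) (t / lam) (x / lam) / lam := by
      have : (fun y => u (t / lam) (y / lam) ^ m) = fun y => ψ (y / lam) := rfl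
      rw [pdX, this, deriv_comp_div_const' ψ lam hlam' x ((hψsm.differentiable (ne_of_gt (zero_lt_one.trans_le h1le))) _)]
      rfl
    -- pdX3 term
    have h3 : pdX3 (fun t x => u (t / lam) (x / lam) ^ n) t x
        = pdX3 (fun t x => u t x ^ n) (t / lam) (x / lam) / lam ^ 3 := by
      have e0 : (fun y => u (t / lam) (y / lam) ^ n) = fun y => g (y / lam) := rfl
      rw [pdX3, e0, deriv_comp_div_const_fun g lam hlam' hgd]
      have e1 : deriv (fun y => deriv g (y / lam) / lam)
          = fun y => deriv (deriv g) (y / lam) / lam / lam := by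
        funext y
        rw [deriv_div_const, deriv_comp_div_const' (deriv g) lam hlam' y (hgd' _)]
      rw [e1]
      have e2 : deriv (fun y => deriv (deriv g) (y / lam) / lam / lam) x
          = deriv (deriv (deriv g)) (x / lam) / lam / lam / lam := by
        have : (fun y => deriv (deriv g) (y / lam) / lam / lam)
            = fun y => (deriv (deriv g) (y / lam)) / (lam * lam) := by
          funext y; ring
        rw [this]
        have hgd'' : DifferentiableAt ℝ (deriv (deriv g)) (x / lam) := by
          have := (contDiff_infty_iff_deriv.mp (contDiff_infty_iff_deriv.mp hginf).2).2
          exact (this.differentiable (ne_of_gt (zero_lt_one.trans_le h1le))) _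
        rw [deriv_div_const, deriv_comp_div_const' (deriv (deriv g)) lam hlam' x hgd'']
        ring
      rw [e2, pdX3]
      ring
    rw [h1, h2, h3]
    have hpde := hupde (t / lam) (x / lam) htl
    linear_combination hpde / lam
end

section
/- (Table 2, Case 5: Galilean-type symmetry of the variable-coefficient KdV equation.) Let ε = ±1, let f : ℝ → ℝ be an arbitrary nonvanishing function, and let s ∈ ℝ. Suppose u : ℝ → ℝ → ℝ is smooth and satisfies ∂_t u + ε ∂_x(u²) + f(t) ∂_x^3 u = 0 on ℝ × ℝ. Then the function v defined by v(t, x) = u(t, x - 2εs·t) + s is smooth and satisfies the same equation ∂_t v + ε ∂_x(v²) + f(t) ∂_x^3 v = 0 on ℝ × ℝ. (This is the finite form of the symmetry generator 2εt ∂_x + ∂_u, admitted for every f when n = 1, m = 2.) -/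
open Real

/-- Table 2, Case 5: the Galilean-type symmetry (finite form of `2εt∂_x + ∂_u`)
of the variable-coefficient KdV equation `u_t + ε(u²)_x + f(t)u_xxx = 0`. -/
theorem galilean_symmetry_vcKdV
    (ε : ℝ) (hε : ε = 1 ∨ ε = -1)
    (f : ℝ → ℝ) (hf : ∀ t : ℝ, f t ≠ 0) (s : ℝ)
    (u : ℝ → ℝ → ℝ) (hu : ContDiff ℝ (⊤ : ℕ∞) (Function.uncurry u))
    (hupde : ∀ t x : ℝ,
      pdT u t x + ε * pdX (fun t x => u t x ^ 2) t x + f t * pdX3 u t x = 0)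
    (v : ℝ → ℝ → ℝ) (hv : ∀ t x : ℝ, v t x = u t (x - 2 * ε * s * t) + s) :
    ContDiff ℝ (⊤ : ℕ∞) (Function.uncurry v) ∧
      ∀ t x : ℝ,
        pdT v t x + ε * pdX (fun t x => v t x ^ 2) t x + f t * pdX3 v t x = 0 := by
  have hdiff : Differentiable ℝ (Function.uncurry u) := hu.differentiable (by simp)
  have hvfun : v = fun t x => u t (x - 2 * ε * s * t) + s := by
    funext t x; exact hv t x
  constructor
  · have : Function.uncurry v =
        (Function.uncurry u) ∘ (fun p : ℝ × ℝ => (p.1, p.2 - 2 * ε * s * p.1)) + fun _ => s := by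
      funext p
      simp [Function.uncurry, hv p.1 p.2]
    rw [this]
    exact (hu.comp (contDiff_fst.prodMk (contDiff_snd.sub (contDiff_const.mul contDiff_fst)))).add
      contDiff_const
  · intro t x
    set c : ℝ := x - 2 * ε * s * t with hc
    set F := fderiv ℝ (Function.uncurry u) (t, c) with hF
    -- slice derivatives of u at (t, c)
    have hline_t : HasDerivAt (fun τ : ℝ => ((τ, c) : ℝ × ℝ)) (1, 0) t :=
      (hasDerivAt_id t).prodMk (hasDerivAt_const t c)
    have hslice_t : HasDerivAt (fun τ => u τ c) (F (1, 0)) t :=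
      by have := ((hdiff (t, c)).hasFDerivAt).comp_hasDerivAt t hline_t; exact this
    have hline_x : HasDerivAt (fun y : ℝ => ((t, y) : ℝ × ℝ)) (0, 1) c :=
      (hasDerivAt_const c t).prodMk (hasDerivAt_id c)
    have hslice_x : HasDerivAt (fun y => u t y) (F (0, 1)) c :=
      by have := ((hdiff (t, c)).hasFDerivAt).comp_hasDerivAt c hline_x; exact this
    -- the PDE for u at (t, c), with partials computed
    have hpde := hupde t c
    have hpdTu : pdT u t c = F (1, 0) := hslice_t.deriv
    have hpdXu2 : pdX (fun t x => u t x ^ 2) t c = 2 * u t c * F (0, 1) := by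
      have := (hslice_x.fun_pow 2).deriv
      simpa [pdX, mul_comm, mul_assoc, mul_left_comm] using this
    -- pdT v
    have hlineT : HasDerivAt (fun τ : ℝ => ((τ, x - 2 * ε * s * τ) : ℝ × ℝ))
        (1, -(2 * ε * s)) t := by
      refine (hasDerivAt_id t).prodMk ?_
      simpa using ((hasDerivAt_const t x).fun_sub ((hasDerivAt_id t).const_mul (2 * ε * s)))
    have hT : HasDerivAt (fun τ => v τ x) (F (1, -(2 * ε * s))) t := by
      have h0 : HasDerivAt (fun τ => u τ (x - 2 * ε * s * τ)) (F (1, -(2 * ε * s))) t :=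
        by have := ((hdiff (t, c)).hasFDerivAt).comp_hasDerivAt t hlineT; exact this
      simpa [hvfun] using h0.add_const s
    have hTsplit : F (1, -(2 * ε * s)) = F (1, 0) - (2 * ε * s) * F (0, 1) := by
      have : ((1 : ℝ), -(2 * ε * s)) = ((1 : ℝ), (0 : ℝ)) - (2 * ε * s) • ((0 : ℝ), (1 : ℝ)) := by
        simp [Prod.ext_iff]
      rw [this, map_sub, map_smul, smul_eq_mul]
    have hpdTv : pdT v t x = F (1, 0) - (2 * ε * s) * F (0, 1) := by
      rw [pdT, hT.deriv, hTsplit]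
    -- pdX (v^2)
    have hux : HasDerivAt (fun y => u t (y - 2 * ε * s * t)) (F (0, 1)) x := by
      simpa [Function.comp_def] using hslice_x.comp x ((hasDerivAt_id x).sub_const (2 * ε * s * t))
    have hvx : HasDerivAt (fun y => v t y) (F (0, 1)) x := by
      simpa [hvfun] using hux.add_const s
    have hpdXv2 : pdX (fun t x => v t x ^ 2) t x = 2 * (u t c + s) * F (0, 1) := by
      have := (hvx.fun_pow 2).deriv
      simp only [pdX]
      rw [this, hv t x]
      ring
    -- pdX3 v  = pdX3 u at shifted point
    have h1 : deriv (fun y => v t y) = fun y => deriv (fun y => u t y) (y - 2 * ε * s * t) := by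
      funext y
      rw [hvfun]
      simp only []
      rw [deriv_add_const, deriv_comp_sub_const]
    have h2 : deriv (deriv (fun y => v t y)) =
        fun y => deriv (deriv (fun y => u t y)) (y - 2 * ε * s * t) := by
      funext y
      rw [h1, deriv_comp_sub_const]
    have hpdX3v : pdX3 v t x = pdX3 u t c := by
      rw [pdX3, h2, deriv_comp_sub_const, pdX3]
    rw [hpdTv, hpdXv2, hpdX3v]
    rw [hpdTu, hpdXu2] at hpde
    linear_combination hpde
end

section
/- (Remark 2, Case 3: projective symmetry when f(t) = t.) Let ε = ±1 and s ∈ ℝ, and let Ω = {(t, x) : t > 0 and 1 - 2εs·t > 0}. Suppose u : ℝ → ℝ → ℝ is smooth and satisfies ∂_t u + ε ∂_x(u²) + t ∂_x^3 u = 0 for all t > 0, x ∈ ℝ, and suppose v : ℝ → ℝ → ℝ is smooth with v(t/(1 - 2εs·t), x/(1 - 2εs·t)) = (1 - 2εs·t)·u(t, x) + s·x for all (t, x) ∈ Ω. Then for every (t, x) ∈ Ω, at the point (τ, y) = (t/(1 - 2εs·t), x/(1 - 2εs·t)) one has ∂_τ v + ε ∂_y(v²) + τ ∂_y^3 v = 0.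 (This is the finite form of the additional symmetry generator 2εt² ∂_t + 2εtx ∂_x + (x - 2εtu) ∂_u admitted by u_t + ε(u²)_x + t u_xxx = 0.) -/
open Real

/-- Remark 2, Case 3: the projective symmetry (finite form of
`2εt²∂_t + 2εtx∂_x + (x - 2εtu)∂_u`) of `u_t + ε(u²)_x + t u_xxx = 0`. -/
theorem projective_symmetry_f_t
    (ε : ℝ) (hε : ε = 1 ∨ ε = -1) (s : ℝ)
    (Ω : Set (ℝ × ℝ)) (hΩ : Ω = {p : ℝ × ℝ | 0 < p.1 ∧ 0 < 1 - 2 * ε * s * p.1})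
    (u : ℝ → ℝ → ℝ) (hu : ContDiff ℝ (⊤ : ℕ∞) (Function.uncurry u))
    (hupde : ∀ t x : ℝ, 0 < t →
      pdT u t x + ε * pdX (fun t x => u t x ^ 2) t x + t * pdX3 u t x = 0)
    (v : ℝ → ℝ → ℝ) (hv : ContDiff ℝ (⊤ : ℕ∞) (Function.uncurry v))
    (hvu : ∀ t x : ℝ, (t, x) ∈ Ω →
      v (t / (1 - 2 * ε * s * t)) (x / (1 - 2 * ε * s * t))
        = (1 - 2 * ε * s * t) * u t x + s * x) :
    ∀ t x : ℝ, (t, x) ∈ Ω →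
      pdT v (t / (1 - 2 * ε * s * t)) (x / (1 - 2 * ε * s * t))
        + ε * pdX (fun τ y => v τ y ^ 2) (t / (1 - 2 * ε * s * t))
            (x / (1 - 2 * ε * s * t))
        + (t / (1 - 2 * ε * s * t)) * pdX3 v (t / (1 - 2 * ε * s * t))
            (x / (1 - 2 * ε * s * t)) = 0 := by
  intro t x hmem
  subst hΩ
  obtain ⟨ht, hc⟩ := hmem
  simp only at ht hc
  obtain ⟨c, hcdef⟩ : ∃ c : ℝ, c = 1 - 2 * ε * s * t := ⟨_, rfl⟩
  rw [← hcdef] at hc ⊢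
  obtain ⟨τ, hτdef⟩ : ∃ τ : ℝ, τ = t / c := ⟨_, rfl⟩
  obtain ⟨y, hydef⟩ : ∃ y : ℝ, y = x / c := ⟨_, rfl⟩
  rw [← hτdef, ← hydef]
  have hc0 : c ≠ 0 := ne_of_gt hc
  have hct : c * τ = t := by rw [hτdef]; field_simp
  have hcy : c * y = x := by rw [hydef]; field_simp
  have hτpos : 0 < τ := by rw [hτdef]; exact div_pos ht hc
  have hbτmul : (1 + 2 * ε * s * τ) * c = 1 := by
    linear_combination 2 * ε * s * hct + hcdef
  have hbτ : 1 + 2 * ε * s * τ = c⁻¹ := eq_inv_of_mul_eq_one_left hbτmul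
  have hbτpos : 0 < 1 + 2 * ε * s * τ := by rw [hbτ]; exact inv_pos.mpr hc
  have hcb : (1 + 2 * ε * s * τ)⁻¹ = c := by rw [hbτ, inv_inv]
  -- explicit formula for v on the (open) image region
  have hvw : ∀ σ : ℝ, 0 < σ → 0 < 1 + 2 * ε * s * σ → ∀ z : ℝ,
      v σ z = (1 + 2 * ε * s * σ)⁻¹ * u ((1 + 2 * ε * s * σ)⁻¹ * σ)
        ((1 + 2 * ε * s * σ)⁻¹ * z) + s * ((1 + 2 * ε * s * σ)⁻¹ * z) := by
    intro σ hσ hbσ z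
    have hbpos : 0 < (1 + 2 * ε * s * σ)⁻¹ := inv_pos.mpr hbσ
    have hb0 : (1 + 2 * ε * s * σ)⁻¹ ≠ 0 := ne_of_gt hbpos
    have hb1 : 1 - 2 * ε * s * ((1 + 2 * ε * s * σ)⁻¹ * σ) = (1 + 2 * ε * s * σ)⁻¹ := by
      field_simp
      ring
    have hmem' : (((1 + 2 * ε * s * σ)⁻¹ * σ, (1 + 2 * ε * s * σ)⁻¹ * z) : ℝ × ℝ) ∈
        {p : ℝ × ℝ | 0 < p.1 ∧ 0 < 1 - 2 * ε * s * p.1} :=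
      ⟨mul_pos hbpos hσ, by rw [hb1]; exact hbpos⟩
    have h := hvu _ _ hmem'
    rw [hb1, mul_div_cancel_left₀ _ hb0, mul_div_cancel_left₀ _ hb0] at h
    exact h
  -- smoothness facts
  have hle : ((⊤ : ℕ∞) : WithTop ℕ∞) ≠ 0 := by simp
  have hud : Differentiable ℝ (Function.uncurry u) := hu.differentiable hle
  have hUc : ContDiff ℝ (⊤ : ℕ∞) (fun z => u t z) :=
    hu.comp (contDiff_const.prodMk contDiff_id)
  have hUd : Differentiable ℝ (fun z => u t z) := hUc.differentiable hle
  have hU1 : ContDiff ℝ (⊤ : ℕ∞) (deriv (fun z => u t z)) :=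
    (contDiff_infty_iff_deriv.mp hUc).2
  have hU1d : Differentiable ℝ (deriv (fun z => u t z)) := hU1.differentiable hle
  have hU2 : ContDiff ℝ (⊤ : ℕ∞) (deriv (deriv (fun z => u t z))) :=
    (contDiff_infty_iff_deriv.mp hU1).2
  have hU2d : Differentiable ℝ (deriv (deriv (fun z => u t z))) := hU2.differentiable hle
  have hlinc : ∀ z : ℝ, HasDerivAt (fun w : ℝ => c * w) c z := fun z => by
    simpa using (hasDerivAt_id z).const_mul c
  -- the slice of v at time τ
  have hslice : ∀ z : ℝ, v τ z = c * u t (c * z) + s * (c * z) := by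
    intro z
    rw [hvw τ hτpos hbτpos z, hcb, hct]
  have hslicefun : (fun z => v τ z) = fun z => c * u t (c * z) + s * (c * z) :=
    funext hslice
  -- first x-derivative of the slice
  have d1 : deriv (fun z => c * u t (c * z) + s * (c * z))
      = fun z => c ^ 2 * deriv (fun z => u t z) (c * z) + s * c := by
    funext z
    have h1 : HasDerivAt (fun w => u t (c * w)) (deriv (fun z => u t z) (c * z) * c) z :=
      (hUd (c * z)).hasDerivAt.comp z (hlinc z)
    have h2 : HasDerivAt (fun w => c * u t (c * w) + s * (c * w))
        (c * (deriv (fun z => u t z) (c * z) * c) + s * c) z :=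
      (h1.const_mul c).add ((hlinc z).const_mul s)
    rw [h2.deriv]; ring
  have d2 : deriv (fun z => c ^ 2 * deriv (fun z => u t z) (c * z) + s * c)
      = fun z => c ^ 3 * deriv (deriv (fun z => u t z)) (c * z) := by
    funext z
    have h1 : HasDerivAt (fun w => deriv (fun z => u t z) (c * w))
        (deriv (deriv (fun z => u t z)) (c * z) * c) z :=
      (hU1d (c * z)).hasDerivAt.comp z (hlinc z)
    have h2 : HasDerivAt (fun w => c ^ 2 * deriv (fun z => u t z) (c * w) + s * c)
        (c ^ 2 * (deriv (deriv (fun z => u t z)) (c * z) * c)) z :=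
      (h1.const_mul (c ^ 2)).add_const (s * c)
    rw [h2.deriv]; ring
  have d3 : HasDerivAt (fun z => c ^ 3 * deriv (deriv (fun z => u t z)) (c * z))
      (c ^ 3 * (deriv (deriv (deriv (fun z => u t z))) (c * y) * c)) y :=
    ((hU2d (c * y)).hasDerivAt.comp y (hlinc y)).const_mul (c ^ 3)
  -- third x-derivative of v
  have hC : pdX3 v τ y = c ^ 4 * pdX3 u t x := by
    show deriv (deriv (deriv (fun z => v τ z))) y = _
    rw [hslicefun, d1, d2, d3.deriv, hcy]
    show c ^ 3 * (deriv (deriv (deriv (fun z => u t z))) x * c) = _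
    simp only [pdX3]
    ring
  -- x-derivative of v²
  have hAy : HasDerivAt (fun z => v τ z)
      (c * (deriv (fun z => u t z) x * c) + s * c) y := by
    rw [hslicefun]
    have h1 : HasDerivAt (fun w => u t (c * w)) (deriv (fun z => u t z) (c * y) * c) y :=
      (hUd (c * y)).hasDerivAt.comp y (hlinc y)
    rw [← hcy]
    exact (h1.const_mul c).add ((hlinc y).const_mul s)
  have hB : pdX (fun τ y => v τ y ^ 2) τ y
      = 2 * (c * u t x + s * x) * (c * (deriv (fun z => u t z) x * c) + s * c) := by
    show deriv (fun z => v τ z ^ 2) y = _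
    rw [(hAy.fun_pow 2).deriv]
    have hvτy : v τ y = c * u t x + s * x := by rw [hslice y, hcy]
    rw [hvτy]
    norm_num
  -- partial derivatives of u via the Fréchet derivative
  have hF : HasFDerivAt (Function.uncurry u) (fderiv ℝ (Function.uncurry u) (t, x)) (t, x) :=
    (hud (t, x)).hasFDerivAt
  have h10 : (fderiv ℝ (Function.uncurry u) (t, x)) (1, 0) = pdT u t x := by
    have h := hF.comp_hasDerivAt t ((hasDerivAt_id t).prodMk (hasDerivAt_const t x))
    exact (h.deriv).symm
  have h01 : (fderiv ℝ (Function.uncurry u) (t, x)) (0, 1) = pdX u t x := by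
    have h := hF.comp_hasDerivAt x ((hasDerivAt_const x t).prodMk (hasDerivAt_id x))
    exact (h.deriv).symm
  -- t-derivative of v
  have hbder : HasDerivAt (fun σ : ℝ => (1 + 2 * ε * s * σ)⁻¹) (-(2 * ε * s) * c ^ 2) τ := by
    have h0 : HasDerivAt (fun σ : ℝ => 1 + 2 * ε * s * σ) (2 * ε * s) τ := by
      simpa using ((hasDerivAt_id τ).const_mul (2 * ε * s)).const_add 1
    have h1 := h0.inv (ne_of_gt hbτpos)
    refine h1.congr_deriv (Eq.symm ?_)
    rw [hbτ]
    field_simp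
  have hg1 : HasDerivAt (fun σ : ℝ => (1 + 2 * ε * s * σ)⁻¹ * σ) (c ^ 2) τ := by
    have h := hbder.mul (hasDerivAt_id τ)
    simp only [id_eq] at h
    refine h.congr_deriv (Eq.symm ?_)
    rw [hcb]
    linear_combination (2 * ε * s * c) * hct + c * hcdef
  have hg2 : HasDerivAt (fun σ : ℝ => (1 + 2 * ε * s * σ)⁻¹ * y)
      (-(2 * ε * s) * c ^ 2 * y) τ := hbder.mul_const y
  have hγ : HasDerivAt (fun σ : ℝ => (((1 + 2 * ε * s * σ)⁻¹ * σ : ℝ),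
      ((1 + 2 * ε * s * σ)⁻¹ * y : ℝ))) ((c ^ 2, -(2 * ε * s) * c ^ 2 * y) : ℝ × ℝ) τ :=
    hg1.prodMk hg2
  have hγτ : ((t, x) : ℝ × ℝ)
      = (((1 + 2 * ε * s * τ)⁻¹ * τ : ℝ), ((1 + 2 * ε * s * τ)⁻¹ * y : ℝ)) := by
    rw [hcb, hct, hcy]
  have hcomp : HasDerivAt (fun σ : ℝ => u ((1 + 2 * ε * s * σ)⁻¹ * σ) ((1 + 2 * ε * s * σ)⁻¹ * y))
      ((fderiv ℝ (Function.uncurry u) (t, x)) ((c ^ 2, -(2 * ε * s) * c ^ 2 * y) : ℝ × ℝ)) τ :=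
    hF.comp_hasDerivAt_of_eq τ hγ hγτ
  have hFlin : (fderiv ℝ (Function.uncurry u) (t, x)) ((c ^ 2, -(2 * ε * s) * c ^ 2 * y) : ℝ × ℝ)
      = c ^ 2 * pdT u t x + (-(2 * ε * s) * c ^ 2 * y) * pdX u t x := by
    have hpt : ((c ^ 2, -(2 * ε * s) * c ^ 2 * y) : ℝ × ℝ)
        = (c ^ 2) • ((1 : ℝ), (0 : ℝ)) + (-(2 * ε * s) * c ^ 2 * y) • ((0 : ℝ), (1 : ℝ)) := by
      simp [Prod.ext_iff]
    rw [hpt, map_add, map_smul, map_smul, h10, h01, smul_eq_mul, smul_eq_mul]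
  have hWτ : HasDerivAt (fun σ : ℝ => (1 + 2 * ε * s * σ)⁻¹ *
      u ((1 + 2 * ε * s * σ)⁻¹ * σ) ((1 + 2 * ε * s * σ)⁻¹ * y)
      + s * ((1 + 2 * ε * s * σ)⁻¹ * y))
      (-(2 * ε * s) * c ^ 2 * u t x
        + c * (c ^ 2 * pdT u t x + (-(2 * ε * s) * c ^ 2 * y) * pdX u t x)
        + s * (-(2 * ε * s) * c ^ 2 * y)) τ := by
    have h := (hbder.mul hcomp).add (hg2.const_mul s)
    refine h.congr_deriv (Eq.symm ?_)
    rw [hcb, hct, hcy, hFlin]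
  have hopen : IsOpen {σ : ℝ | 0 < σ ∧ 0 < 1 + 2 * ε * s * σ} := by
    have h1 : Continuous fun σ : ℝ => σ := continuous_id
    have h2 : Continuous fun σ : ℝ => 1 + 2 * ε * s * σ :=
      continuous_const.add (continuous_const.mul continuous_id)
    exact (isOpen_lt continuous_const h1).inter (isOpen_lt continuous_const h2)
  have hev : (fun σ => v σ y) =ᶠ[nhds τ] (fun σ : ℝ => (1 + 2 * ε * s * σ)⁻¹ *
      u ((1 + 2 * ε * s * σ)⁻¹ * σ) ((1 + 2 * ε * s * σ)⁻¹ * y)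
      + s * ((1 + 2 * ε * s * σ)⁻¹ * y)) := by
    filter_upwards [hopen.mem_nhds ⟨hτpos, hbτpos⟩] with σ hσ
    exact hvw σ hσ.1 hσ.2 y
  have hA : pdT v τ y = -(2 * ε * s) * c ^ 2 * u t x
      + c * (c ^ 2 * pdT u t x + (-(2 * ε * s) * c ^ 2 * y) * pdX u t x)
      + s * (-(2 * ε * s) * c ^ 2 * y) := by
    show deriv (fun σ => v σ y) τ = _
    rw [hev.deriv_eq, hWτ.deriv]
  -- the PDE for u in convenient form
  have hQ : deriv (fun z => u t z) x = pdX u t x := rfl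
  have hx2 : pdX (fun t x => u t x ^ 2) t x = 2 * u t x * pdX u t x := by
    show deriv (fun z => u t z ^ 2) x = _
    rw [((hUd x).hasDerivAt.fun_pow 2).deriv, hQ]
    norm_num
  have hpde2 : pdT u t x + ε * (2 * u t x * pdX u t x) + t * pdX3 u t x = 0 := by
    have h := hupde t x ht
    rw [hx2] at h
    exact h
  rw [hA, hB, hC, hQ]
  linear_combination (c ^ 3) * hpde2 + (c ^ 3 * pdX3 u t x) * hct
    - (2 * ε * s * c ^ 2 * pdX u t x + 2 * ε * s ^ 2 * c) * hcy
end

section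
/- (Equivalence of f = t² and f = 1/t for the KdV-type equation.) Let ε = ±1. Suppose u : ℝ → ℝ → ℝ is smooth and satisfies ∂_t u + ε ∂_x(u²) + t² ∂_x^3 u = 0 for all t > 0, x ∈ ℝ, and suppose v : ℝ → ℝ → ℝ is smooth with v(1/t, -x/t) = (2εt·u(t,x) - x)/(2ε) for all t > 0, x ∈ ℝ. Then for every t > 0 and x ∈ ℝ, at the point (τ, y) = (1/t, -x/t) one has ∂_τ v + ε ∂_y(v²) + τ^{-1} ∂_y^3 v = 0; i.e., the transformation t̃ = 1/t, x̃ = -x/t, ũ = (2εtu - x)/(2ε) maps the equation u_t + ε(u²)_x + t² u_xxx = 0 to the equation ũ_t̃ + ε(ũ²)_x̃ + t̃^{-1} ũ_x̃x̃x̃ = 0. -/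
open Real

/-- Equivalence of `f = t²` and `f = 1/t` for the KdV-type equation, via
`t̃ = 1/t`, `x̃ = -x/t`, `ũ = (2εtu - x)/(2ε)`. -/
theorem equivalence_t_squared_and_t_inverse
    (ε : ℝ) (hε : ε = 1 ∨ ε = -1)
    (u : ℝ → ℝ → ℝ) (hu : ContDiff ℝ (⊤ : ℕ∞) (Function.uncurry u))
    (hupde : ∀ t x : ℝ, 0 < t →
      pdT u t x + ε * pdX (fun t x => u t x ^ 2) t x + t ^ 2 * pdX3 u t x = 0)
    (v : ℝ → ℝ → ℝ) (hv : ContDiff ℝ (⊤ : ℕ∞) (Function.uncurry v))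
    (hvu : ∀ t x : ℝ, 0 < t →
      v (1 / t) (-x / t) = (2 * ε * t * u t x - x) / (2 * ε)) :
    ∀ t x : ℝ, 0 < t →
      pdT v (1 / t) (-x / t)
        + ε * pdX (fun τ y => v τ y ^ 2) (1 / t) (-x / t)
        + (1 / t)⁻¹ * pdX3 v (1 / t) (-x / t) = 0 := by
  intro t x ht
  have ht' : t ≠ 0 := ht.ne'
  have hε0 : ε ≠ 0 := by rcases hε with h | h <;> simp [h]
  set τ : ℝ := 1 / t with hτdef
  have hτ : 0 < τ := by positivity
  have hτ0 : τ ≠ 0 := hτ.ne'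
  set y : ℝ := -x / t with hydef
  have hyt : -(y * t) = x := by rw [hydef]; field_simp
  have hτt : τ⁻¹ = t := by rw [hτdef, one_div, inv_inv]
  have hFd : Differentiable ℝ (Function.uncurry u) := hu.differentiable (by simp)
  set φ : ℝ → ℝ := fun z => u t z with hφdef
  have hφ : ContDiff ℝ (⊤ : ℕ∞) φ := hu.comp (contDiff_const.prodMk contDiff_id)
  have hφ1 : ContDiff ℝ (⊤ : ℕ∞) (deriv φ) := (contDiff_infty_iff_deriv.mp hφ).2
  have hDφ : ∀ z, HasDerivAt φ (deriv φ z) z := fun z => ((hφ.differentiable (by simp)) z).hasDerivAt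
  have hDφ1 : ∀ z, HasDerivAt (deriv φ) (deriv (deriv φ) z) z :=
    fun z => ((hφ1.differentiable (by simp)) z).hasDerivAt
  have hDφ2 : ∀ z, HasDerivAt (deriv (deriv φ)) (deriv (deriv (deriv φ)) z) z :=
    fun z => ((((contDiff_infty_iff_deriv.mp hφ1).2).differentiable (by simp)) z).hasDerivAt
  -- the spatial transform function
  set G : ℝ → ℝ := fun z => (2 * ε * t * φ (-(z * t)) - -(z * t)) / (2 * ε) with hGdef
  have hGv : (fun z => v τ z) = G := by
    funext z
    have h1 := hvu t (-(z * t)) ht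
    have h2 : -(-(z * t)) / t = z := by field_simp
    rw [h2] at h1
    simpa [hGdef, hτdef, hφdef] using h1
  have hlin : ∀ z : ℝ, HasDerivAt (fun z : ℝ => -(z * t)) (-t) z := by
    intro z
    simpa using ((hasDerivAt_id z).mul_const t).fun_neg
  have hG1 : ∀ z, HasDerivAt G ((2 * ε * t * (deriv φ (-(z * t)) * -t) - -t) / (2 * ε)) z := by
    intro z
    have hc : HasDerivAt (fun z : ℝ => φ (-(z * t))) (deriv φ (-(z * t)) * -t) z := by
      simpa [Function.comp_def] using (hDφ (-(z * t))).comp z (hlin z)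
    exact (((hc.const_mul (2 * ε * t)).sub (hlin z)).div_const (2 * ε))
  have hG1' : deriv G = fun z => (2 * ε * t * (deriv φ (-(z * t)) * -t) - -t) / (2 * ε) :=
    funext fun z => (hG1 z).deriv
  have hG2 : ∀ z, HasDerivAt (deriv G)
      ((2 * ε * t * (deriv (deriv φ) (-(z * t)) * -t * -t)) / (2 * ε)) z := by
    intro z
    rw [hG1']
    have hc : HasDerivAt (fun z : ℝ => deriv φ (-(z * t))) (deriv (deriv φ) (-(z * t)) * -t) z := by
      simpa [Function.comp_def] using (hDφ1 (-(z * t))).comp z (hlin z)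
    have := (((hc.mul_const (-t)).const_mul (2 * ε * t)).sub_const (-t)).div_const (2 * ε)
    simpa [mul_assoc] using this
  have hG2' : deriv (deriv G) = fun z =>
      (2 * ε * t * (deriv (deriv φ) (-(z * t)) * -t * -t)) / (2 * ε) :=
    funext fun z => (hG2 z).deriv
  have hG3 : HasDerivAt (deriv (deriv G))
      ((2 * ε * t * (deriv (deriv (deriv φ)) (-(y * t)) * -t * -t * -t)) / (2 * ε)) y := by
    rw [hG2']
    have hc : HasDerivAt (fun z : ℝ => deriv (deriv φ) (-(z * t)))
        (deriv (deriv (deriv φ)) (-(y * t)) * -t) y := by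
      simpa [Function.comp_def] using (hDφ2 (-(y * t))).comp y (hlin y)
    have := ((hc.mul_const (-t)).mul_const (-t)).const_mul (2 * ε * t) |>.div_const (2 * ε)
    simpa [mul_assoc] using this
  -- values at the evaluation point
  have hX3 : pdX3 v τ y = 2 * ε * t * (deriv (deriv (deriv φ)) x * -t * -t * -t) / (2 * ε) := by
    rw [pdX3, hGv]
    rw [hyt] at hG3
    exact hG3.deriv
  have hXsq : pdX (fun τ y => v τ y ^ 2) τ y
      = 2 * G y * ((2 * ε * t * (deriv φ x * -t) - -t) / (2 * ε)) := by
    have h2 : (fun z => v τ z ^ 2) = fun z => G z ^ 2 := by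
      funext z; exact congrArg (· ^ 2) (congrFun hGv z)
    rw [pdX, h2]
    have hg := hG1 y
    rw [hyt] at hg
    have := hg.fun_pow 2
    simpa [mul_comm, mul_assoc, mul_left_comm] using this.deriv
  -- partial derivatives of u via the total derivative
  set L := fderiv ℝ (Function.uncurry u) (t, x) with hLdef
  have hLt : pdT u t x = L (1, 0) := by
    have hcurve : HasDerivAt (fun s : ℝ => ((s, x) : ℝ × ℝ)) ((1, 0) : ℝ × ℝ) t :=
      (hasDerivAt_id t).prodMk (hasDerivAt_const t x)
    have := (hFd (t, x)).hasFDerivAt.comp_hasDerivAt t hcurve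
    exact this.deriv.symm ▸ rfl
  have hLx : deriv φ x = L (0, 1) := by
    have hcurve : HasDerivAt (fun z : ℝ => ((t, z) : ℝ × ℝ)) ((0, 1) : ℝ × ℝ) x :=
      (hasDerivAt_const x t).prodMk (hasDerivAt_id x)
    have := (hFd (t, x)).hasFDerivAt.comp_hasDerivAt x hcurve
    exact this.deriv.symm ▸ rfl
  -- the temporal transform function
  set K : ℝ → ℝ :=
    fun s => (2 * ε * s⁻¹ * u s⁻¹ (-(y * s⁻¹)) - -(y * s⁻¹)) / (2 * ε) with hKdef
  have hKv : (fun s => v s y) =ᶠ[nhds τ] K := by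
    filter_upwards [eventually_gt_nhds hτ] with s hs
    have hs0 : s ≠ 0 := hs.ne'
    have h1 := hvu s⁻¹ (-(y * s⁻¹)) (by positivity)
    have h2 : (1 : ℝ) / s⁻¹ = s := by field_simp
    have h3 : -(-(y * s⁻¹)) / s⁻¹ = y := by field_simp
    rw [h2, h3] at h1
    simpa [hKdef] using h1
  have hpt : ((τ⁻¹, -(y * τ⁻¹)) : ℝ × ℝ) = (t, x) := by
    rw [hτt, hyt]
  have hcurve : HasDerivAt (fun s : ℝ => ((s⁻¹, -(y * s⁻¹)) : ℝ × ℝ))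
      ((-(τ ^ 2)⁻¹, -(y * -(τ ^ 2)⁻¹)) : ℝ × ℝ) τ :=
    (hasDerivAt_inv hτ0).prodMk (((hasDerivAt_inv hτ0).const_mul y).fun_neg)
  have hW : HasDerivAt (fun s : ℝ => u s⁻¹ (-(y * s⁻¹)))
      (L (-(τ ^ 2)⁻¹, -(y * -(τ ^ 2)⁻¹))) τ := by
    have := (hFd ((τ⁻¹, -(y * τ⁻¹)) : ℝ × ℝ)).hasFDerivAt.comp_hasDerivAt τ hcurve
    rw [hpt] at this
    exact this
  have hLsplit : L (-(τ ^ 2)⁻¹, -(y * -(τ ^ 2)⁻¹))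
      = -(τ ^ 2)⁻¹ * L (1, 0) + -(y * -(τ ^ 2)⁻¹) * L (0, 1) := by
    have hvec : ((-(τ ^ 2)⁻¹, -(y * -(τ ^ 2)⁻¹)) : ℝ × ℝ)
        = (-(τ ^ 2)⁻¹) • ((1, 0) : ℝ × ℝ) + (-(y * -(τ ^ 2)⁻¹)) • ((0, 1) : ℝ × ℝ) := by
      simp [Prod.ext_iff]
    rw [hvec, map_add, map_smul, map_smul, smul_eq_mul, smul_eq_mul]
  have hK : HasDerivAt K
      ((2 * ε * -(τ ^ 2)⁻¹ * u τ⁻¹ (-(y * τ⁻¹))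
          + 2 * ε * τ⁻¹ * L (-(τ ^ 2)⁻¹, -(y * -(τ ^ 2)⁻¹))
          - -(y * -(τ ^ 2)⁻¹)) / (2 * ε)) τ := by
    have h1 : HasDerivAt (fun s : ℝ => 2 * ε * s⁻¹) (2 * ε * -(τ ^ 2)⁻¹) τ :=
      (hasDerivAt_inv hτ0).const_mul (2 * ε)
    have h2 := (h1.fun_mul hW).fun_sub (((hasDerivAt_inv hτ0).const_mul y).fun_neg)
    have h3 := h2.div_const (2 * ε)
    convert h3 using 1
  have hT : pdT v τ y
      = (2 * ε * -(τ ^ 2)⁻¹ * u t x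
          + 2 * ε * τ⁻¹ * (-(τ ^ 2)⁻¹ * L (1, 0) + -(y * -(τ ^ 2)⁻¹) * L (0, 1))
          - -(y * -(τ ^ 2)⁻¹)) / (2 * ε) := by
    rw [pdT, hKv.deriv_eq, ← hLsplit]
    have h5 : u τ⁻¹ (-(y * τ⁻¹)) = u t x := by rw [hτt, hyt]
    rw [← h5]
    exact hK.deriv
  -- the PDE for u in explicit form
  have hsq : pdX (fun t x => u t x ^ 2) t x = 2 * u t x * deriv φ x := by
    rw [pdX]
    have := (hDφ x).fun_pow 2
    simpa [mul_comm, mul_assoc, mul_left_comm] using this.deriv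
  have hPDE : L (1, 0) + ε * (2 * u t x * deriv φ x)
      + t ^ 2 * deriv (deriv (deriv φ)) x = 0 := by
    have h0 := hupde t x ht
    rw [hsq] at h0
    rw [← hLt]
    exact h0
  have hAT : L (1, 0) = -(ε * (2 * u t x * deriv φ x))
      - t ^ 2 * deriv (deriv (deriv φ)) x := by linarith
  have hGy : G y = (2 * ε * t * u t x - x) / (2 * ε) := by
    simp only [hGdef]; rw [hyt]
  rw [hT, hXsq, hX3, hGy, ← hLx, hAT, hτdef, hydef]
  field_simp
  ring
end

section
/- (Similarity reduction of u_t + ε(u²)_x + t^{-1} u_xxx = 0.) Let ε = ±1 and a ∈ ℝ, and let φ : ℝ → ℝ be a C³ function satisfying the ODE 3φ'''(ω) + 6ε·φ(ω)·φ'(ω) - a·φ'(ω) - 3·φ(ω) = 0 for all ω ∈ ℝ. Then the function u defined for t > 0, x ∈ ℝ by u(t, x) = (1/t) · φ(x - (a/3)·ln t) satisfies ∂_t u + ε ∂_x(u²) + t^{-1} ∂_x^3 u = 0 for all t > 0, x ∈ ℝ. -/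
open Real

/-- Similarity reduction of `u_t + ε(u²)_x + t⁻¹ u_xxx = 0` via the ansatz
`u = (1/t) φ(x - (a/3) ln t)`. -/
theorem similarity_reduction_t_inverse
    (ε : ℝ) (hε : ε = 1 ∨ ε = -1) (a : ℝ)
    (φ : ℝ → ℝ) (hφ : ContDiff ℝ 3 φ)
    (hode : ∀ ω : ℝ,
      3 * iteratedDeriv 3 φ ω + 6 * ε * φ ω * deriv φ ω
        - a * deriv φ ω - 3 * φ ω = 0)
    (u : ℝ → ℝ → ℝ)
    (hu : ∀ t x : ℝ, u t x = (1 / t) * φ (x - (a / 3) * Real.log t)) :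
    ∀ t x : ℝ, 0 < t →
      pdT u t x + ε * pdX (fun t x => u t x ^ 2) t x + t⁻¹ * pdX3 u t x = 0 := by
  intro t x ht
  have ht' : t ≠ 0 := ht.ne'
  have hφd : Differentiable ℝ φ := hφ.differentiable (by norm_num)
  set c : ℝ := (a / 3) * Real.log t with hc
  set ω : ℝ := x - c with hω
  -- time derivative
  have hinner : HasDerivAt (fun s : ℝ => x - a / 3 * Real.log s) (-(a / 3 * t⁻¹)) t := by
    simpa using ((Real.hasDerivAt_log ht').const_mul (a / 3)).const_sub x
  have hcomp : HasDerivAt (fun s : ℝ => φ (x - a / 3 * Real.log s))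
      (deriv φ ω * (-(a / 3 * t⁻¹))) t := by
    exact ((hφd ω).hasDerivAt).comp t hinner
  have hinv : HasDerivAt (fun s : ℝ => 1 / s) (-(t ^ 2)⁻¹) t := by
    simpa [one_div] using hasDerivAt_inv ht'
  have hT : pdT u t x = -(t ^ 2)⁻¹ * φ ω + 1 / t * (deriv φ ω * (-(a / 3 * t⁻¹))) := by
    have : (fun s => u s x) = fun s : ℝ => 1 / s * φ (x - a / 3 * Real.log s) := by
      funext s; exact hu s x
    rw [pdT, this]
    exact (hinv.mul hcomp).deriv
  -- first x-derivative of the square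
  have hX : HasDerivAt (fun y : ℝ => φ (y - c)) (deriv φ ω) x := by
    simpa [Function.comp_def] using ((hφd ω).hasDerivAt).comp x ((hasDerivAt_id x).sub_const c)
  have hsq : pdX (fun t x => u t x ^ 2) t x
      = 2 * (1 / t * φ ω) ^ 1 * (1 / t * deriv φ ω) := by
    have heq : (fun y => u t y ^ 2) = fun y : ℝ => (1 / t * φ (y - c)) ^ 2 := by
      funext y; rw [hu t y]
    rw [pdX, heq]
    exact ((hX.const_mul (1 / t)).pow 2).deriv
  -- third x-derivative
  have key : ∀ g : ℝ → ℝ, deriv (fun y : ℝ => t⁻¹ * g (y - c)) = fun y => t⁻¹ * deriv g (y - c) := by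
    intro g; funext y
    rw [deriv_const_mul_field]
    congr 1
    exact deriv_comp_sub_const g c y
  have hX3 : pdX3 u t x = t⁻¹ * deriv (deriv (deriv φ)) ω := by
    have heq : (fun y => u t y) = fun y : ℝ => t⁻¹ * φ (y - c) := by
      funext y; rw [hu t y, one_div]
    rw [pdX3, heq, key φ, key (deriv φ), key (deriv (deriv φ))]
  have hiter : iteratedDeriv 3 φ ω = deriv (deriv (deriv φ)) ω := by
    simp [iteratedDeriv_succ, iteratedDeriv_zero]
  have h := hode ω
  rw [hiter] at h
  rw [hT, hsq, hX3]
  linear_combination ((t ^ 2)⁻¹ / 3) * h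
end

section
/- (Section 4: similarity reduction of the K(m,n) equation with f(t) = t^k used in the boundary value problem.) Let m, n, k ∈ ℝ with n ≠ 0 and 3m - n - 2 ≠ 0, let ε = ±1, set p = (k - 2)/(3m - n - 2) and q = (km - k + m - n)/(3m - n - 2), and let φ : ℝ → ℝ be a C³ positive function satisfying the ODE (φ^n)'''(ω) + ε·(φ^m)'(ω) - q·ω·φ'(ω) + p·φ(ω) = 0 for all ω ∈ ℝ (where φ^n, φ^m denote real powers via Real.rpow and primes denote derivatives in ω). Then the function u defined for t > 0, x ∈ ℝ by u(t, x) = t^{p} · φ(x · t^{-q}) is positive and satisfies ∂_t u + ε ∂_x(u^m) + t^k ∂_x^3(u^n) = 0 for all t > 0, x ∈ ℝ. -/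
open Real

lemma aux_iteratedDeriv_const_mul (a : ℝ) (h : ℝ → ℝ) (hh : ContDiff ℝ 3 h) (x : ℝ) :
    iteratedDeriv 3 (fun y => a * h y) x = a * iteratedDeriv 3 h x := by
  have : (fun y => a * h y) = a • h := by funext y; simp [smul_eq_mul]
  rw [this, iteratedDeriv_eq_iteratedFDeriv, iteratedDeriv_eq_iteratedFDeriv,
    iteratedFDeriv_const_smul_apply hh.contDiffAt]
  simp

lemma aux_deriv3_eq (f : ℝ → ℝ) : deriv (deriv (deriv f)) = iteratedDeriv 3 f := by
  rw [show (3 : ℕ) = 2 + 1 from rfl, iteratedDeriv_succ,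
    show (2 : ℕ) = 1 + 1 from rfl, iteratedDeriv_succ, iteratedDeriv_one]

/-- Section 4: similarity reduction of the K(m,n) equation with `f(t) = t^k`
via the ansatz `u = t^p φ(x t^{-q})`, `p = (k-2)/(3m-n-2)`, `q = (km-k+m-n)/(3m-n-2)`. -/
theorem similarity_reduction_Kmn_tk
    (m n k : ℝ) (hn : n ≠ 0) (hden : 3 * m - n - 2 ≠ 0)
    (ε : ℝ) (hε : ε = 1 ∨ ε = -1)
    (p q : ℝ) (hp : p = (k - 2) / (3 * m - n - 2))
    (hq : q = (k * m - k + m - n) / (3 * m - n - 2))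
    (φ : ℝ → ℝ) (hφ : ContDiff ℝ 3 φ) (hφpos : ∀ ω : ℝ, 0 < φ ω)
    (hode : ∀ ω : ℝ,
      iteratedDeriv 3 (fun ω => φ ω ^ n) ω + ε * deriv (fun ω => φ ω ^ m) ω
        - q * ω * deriv φ ω + p * φ ω = 0)
    (u : ℝ → ℝ → ℝ)
    (hu : ∀ t x : ℝ, u t x = t ^ p * φ (x * t ^ (-q))) :
    (∀ t x : ℝ, 0 < t → 0 < u t x) ∧
      ∀ t x : ℝ, 0 < t →
        pdT u t x + ε * pdX (fun t x => u t x ^ m) t x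
          + t ^ k * pdX3 (fun t x => u t x ^ n) t x = 0 := by
  have hφd : Differentiable ℝ φ := hφ.differentiable (by norm_num)
  have hφne : ∀ ω : ℝ, φ ω ≠ 0 := fun ω => (hφpos ω).ne'
  have hgr : ∀ r : ℝ, ContDiff ℝ 3 (fun ω => φ ω ^ r) := fun r =>
    hφ.rpow_const_of_ne hφne
  constructor
  · intro t x ht
    rw [hu]
    exact mul_pos (rpow_pos_of_pos ht p) (hφpos _)
  intro t x ht
  set c : ℝ := t ^ (-q) with hc
  set ω : ℝ := x * t ^ (-q) with hω
  -- derivative in t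
  have h1 : HasDerivAt (fun s : ℝ => s ^ p) (p * t ^ (p - 1)) t :=
    Real.hasDerivAt_rpow_const (Or.inl ht.ne')
  have h2 : HasDerivAt (fun s : ℝ => s ^ (-q)) (-q * t ^ (-q - 1)) t :=
    Real.hasDerivAt_rpow_const (Or.inl ht.ne')
  have h3 : HasDerivAt (fun s : ℝ => x * s ^ (-q)) (x * (-q * t ^ (-q - 1))) t :=
    h2.const_mul x
  have h4 : HasDerivAt φ (deriv φ ω) ω := (hφd ω).hasDerivAt
  have h5 : HasDerivAt (fun s : ℝ => φ (x * s ^ (-q)))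
      (deriv φ ω * (x * (-q * t ^ (-q - 1)))) t := h4.comp t h3
  have h6 : HasDerivAt (fun s : ℝ => s ^ p * φ (x * s ^ (-q)))
      (p * t ^ (p - 1) * φ ω + t ^ p * (deriv φ ω * (x * (-q * t ^ (-q - 1))))) t :=
    h1.mul h5
  have hTval : pdT u t x
      = p * t ^ (p - 1) * φ ω + t ^ p * (deriv φ ω * (x * (-q * t ^ (-q - 1)))) := by
    have : (fun s => u s x) = fun s : ℝ => s ^ p * φ (x * s ^ (-q)) := by
      funext s; rw [hu]
    rw [pdT, this, h6.deriv]
  -- rewriting u t · ^ r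
  have hfun : ∀ r : ℝ, (fun y => u t y ^ r) = fun y => t ^ (p * r) * (fun z => φ z ^ r) (c * y) := by
    intro r
    funext y
    rw [hu, Real.mul_rpow (rpow_pos_of_pos ht p).le (hφpos _).le, ← Real.rpow_mul ht.le]
    simp [hc, mul_comm y (t ^ (-q))]
  -- derivative in x of u^m
  have hgmd : Differentiable ℝ (fun z => φ z ^ m) := (hgr m).differentiable (by norm_num)
  have hXm : pdX (fun t x => u t x ^ m) t x
      = t ^ (p * m) * (deriv (fun z => φ z ^ m) ω * c) := by
    have hin : HasDerivAt (fun y : ℝ => c * y) c x := by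
      simpa using (hasDerivAt_id x).const_mul c
    have h7 : HasDerivAt (fun y : ℝ => (fun z => φ z ^ m) (c * y))
        (deriv (fun z => φ z ^ m) (c * x) * c) x := (hgmd (c * x)).hasDerivAt.comp x hin
    have h8 := (h7.const_mul (t ^ (p * m))).deriv
    rw [pdX, hfun m, h8, mul_comm c x]
  -- third derivative in x of u^n
  have hX3 : pdX3 (fun t x => u t x ^ n) t x
      = c ^ (3 : ℕ) * (t ^ (p * n) * iteratedDeriv 3 (fun z => φ z ^ n) ω) := by
    have hcont : ContDiff ℝ 3 (fun z => t ^ (p * n) * (fun w => φ w ^ n) z) :=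
      contDiff_const.mul (hgr n)
    rw [pdX3, hfun n, aux_deriv3_eq,
      iteratedDeriv_comp_const_mul (f := fun z => t ^ (p * n) * (fun w => φ w ^ n) z) hcont c]
    beta_reduce
    rw [aux_iteratedDeriv_const_mul _ _ (hgr n), mul_comm c x]
  -- exponent identities
  have E1 : t ^ (p * m) * t ^ (-q) = t ^ (p - 1) := by
    rw [← Real.rpow_add ht]; congr 1
    rw [hp, hq]; field_simp; ring
  have E2 : t ^ k * ((t ^ (-q)) ^ (3 : ℕ) * t ^ (p * n)) = t ^ (p - 1) := by
    rw [← Real.rpow_natCast (t ^ (-q)) 3, ← Real.rpow_mul ht.le, ← Real.rpow_add ht,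
      ← Real.rpow_add ht]
    congr 1
    rw [hp, hq]; push_cast; linear_combination (-(k + 1)) * mul_inv_cancel₀ hden
  have E3 : t ^ p * t ^ (-q - 1) = t ^ (p - 1) * t ^ (-q) := by
    rw [← Real.rpow_add ht, ← Real.rpow_add ht]; congr 1; ring
  rw [hTval, hXm, hX3, hc, hω]
  linear_combination (t : ℝ) ^ (p - 1) * hode (x * t ^ (-q))
    + (ε * deriv (fun z => φ z ^ m) (x * t ^ (-q))) * E1
    + (iteratedDeriv 3 (fun z => φ z ^ n) (x * t ^ (-q))) * E2
    + (-q * x * deriv φ (x * t ^ (-q))) * E3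
end
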